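/- Let Δ be a (d−1)-dimensional matroid complex on n vertices. Then (∏_{i=1}^{n−d} m_i(Δ))/(n−d)! ≤ f_{d−1}(Δ) ≤ (∏_{i=1}^{n−d} M_i(Δ))/(n−d)!. Moreover, if either bound is attained with equality, then the minimal graded free resolution of the face ring k[Δ] is pure, i.e., m_i(Δ)=M_i(Δ) for all i=1,…,n−d. -/

import Mathlib

open scoped Classical

namespace MultConj

variable {n : ℕ}

/-- `K` is (the set of faces of) an abstract simplicial complex on the
vertex set `Fin n`: it contains the empty face and is closed under subsets. -/
def IsComplex (K : Finset (Finset (Fin n))) : Prop :=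
  ∅ ∈ K ∧ ∀ F ∈ K, ∀ G ⊆ F, G ∈ K

/-- The induced subcomplex `Δ_W` on a vertex set `W`. -/
def induced (K : Finset (Finset (Fin n))) (W : Finset (Fin n)) :
    Finset (Finset (Fin n)) :=
  K.filter fun F => F ⊆ W

/-- The link of a face `F`. -/
def link (K : Finset (Finset (Fin n))) (F : Finset (Fin n)) :
    Finset (Finset (Fin n)) :=
  K.filter fun G => F ∩ G = ∅ ∧ F ∪ G ∈ K

/-- The `i`-skeleton: all faces of dimension at most `i`,
i.e. with at most `i+1` vertices. -/
def skel (K : Finset (Finset (Fin n))) (i : ℕ) : Finset (Finset (Fin n)) :=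
  K.filter fun F => F.card ≤ i + 1

/-- The number of faces with `j` vertices, i.e. `f_{j-1}(K)`. -/
def fcount (K : Finset (Finset (Fin n))) (j : ℕ) : ℕ :=
  (K.filter fun F => F.card = j).card

/-- The dimension of `K`, as an integer. -/
noncomputable def dimOf (K : Finset (Finset (Fin n))) : ℤ :=
  ((K.sup fun F => F.card : ℕ) : ℤ) - 1

variable (k : Type) [Field k]

/-- Simplicial chains supported on the faces of `K` having `j` vertices
(that is, `(j-1)`-dimensional chains), with coefficients in `k`. -/
abbrev chain (K : Finset (Finset (Fin n))) (j : ℕ) : Type :=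
  {F : Finset (Fin n) // F ∈ K ∧ F.card = j} → k

/-- The simplicial boundary operator (with the standard orientation coming
from the linear order on the vertices), viewed as landing in the space of
all functions on finsets. -/
noncomputable def bdry (K : Finset (Finset (Fin n))) (j : ℕ)
    (c : chain k K j) : Finset (Fin n) → k :=
  fun G => ∑ v : Fin n,
    if h : v ∉ G ∧ insert v G ∈ K ∧ (insert v G).card = j then
      (-1 : k) ^ (G.filter fun w => w < v).card * c ⟨insert v G, h.2⟩
    else 0

/-- Extension of a chain by zero to a function on all finsets. -/
def ext (K : Finset (Finset (Fin n))) (j : ℕ) (c : chain k K j) :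
    Finset (Fin n) → k :=
  fun F => if h : F ∈ K ∧ F.card = j then c ⟨F, h⟩ else 0

/-- `H̃_p(K; k) ≠ 0`: there is a reduced `p`-cycle which is not a boundary.
(For `p ≤ -2` this is false, as there is no `j : ℕ` with `j = p + 1`.) -/
def homNonzero (K : Finset (Finset (Fin n))) (p : ℤ) : Prop :=
  ∃ j : ℕ, (j : ℤ) = p + 1 ∧
    ∃ c : chain k K j, bdry k K j c = 0 ∧
      ∀ b : chain k K (j + 1), bdry k K (j + 1) b ≠ ext k K j c

/-- `H̃_p(K; k) ≅ k`: there is a reduced `p`-cycle `z` which is not a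
boundary, and modulo boundaries every `p`-cycle is a multiple of `z`. -/
def homIsK (K : Finset (Finset (Fin n))) (p : ℤ) : Prop :=
  ∃ j : ℕ, (j : ℤ) = p + 1 ∧
    ∃ z : chain k K j, bdry k K j z = 0 ∧
      (∀ b : chain k K (j + 1), bdry k K (j + 1) b ≠ ext k K j z) ∧
      ∀ c : chain k K j, bdry k K j c = 0 →
        ∃ a : k, ∃ b : chain k K (j + 1),
          bdry k K (j + 1) b = ext k K j (c - a • z)

/-- Cohen–Macaulayness of `K` over `k`, via Reisner's criterion:
`H̃_i(lk F; k) = 0` for every face `F` and every `i < dim K - |F|`. -/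
def IsCM (K : Finset (Finset (Fin n))) : Prop :=
  ∀ F ∈ K, ∀ i : ℤ, i < dimOf K - F.card → ¬ homNonzero k (link K F) i

/-- `K` is `q`-Cohen–Macaulay over `k`: removing any at most `q - 1`
vertices leaves a Cohen–Macaulay complex of the same dimension. -/
def IsQCM (q : ℕ) (K : Finset (Finset (Fin n))) : Prop :=
  ∀ U : Finset (Fin n), U.card ≤ q - 1 →
    IsCM k (induced K Uᶜ) ∧ dimOf (induced K Uᶜ) = dimOf K

/-- `q(K)`: the largest `q` for which `K` is `q`-CM over `k`. -/
noncomputable def qConn (K : Finset (Finset (Fin n))) : ℕ :=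
  sSup {q : ℕ | IsQCM k q K}

/-- The CM-connectivity sequence: `q_i = q(Skel_i K)`. -/
noncomputable def qSeq (K : Finset (Finset (Fin n))) (i : ℕ) : ℕ :=
  qConn k (skel K i)

/-- The minimal shifts `m_i` in the minimal free resolution of the face ring,
via Hochster's formula. -/
noncomputable def mshift (K : Finset (Finset (Fin n))) (i : ℕ) : ℕ :=
  sInf {m : ℕ | ∃ W : Finset (Fin n), W.card = m ∧
    homNonzero k (induced K W) ((W.card : ℤ) - i - 1)}

/-- The maximal shifts `M_i` in the minimal free resolution of the face ring,
via Hochster's formula. -/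
noncomputable def Mshift (K : Finset (Finset (Fin n))) (i : ℕ) : ℕ :=
  sSup {m : ℕ | ∃ W : Finset (Fin n), W.card = m ∧
    homNonzero k (induced K W) ((W.card : ℤ) - i - 1)}

/-- `K` is pure: every maximal face has cardinality `dim K + 1`. -/
def IsPure (K : Finset (Finset (Fin n))) : Prop :=
  ∀ F ∈ K, (∀ G ∈ K, F ⊆ G → G = F) → (F.card : ℤ) = dimOf K + 1

/-- `K` is connected: any two vertices are joined by a path of edges. -/
def Connected (K : Finset (Finset (Fin n))) : Prop :=
  ∀ u v : Fin n, {u} ∈ K → {v} ∈ K →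
    Relation.ReflTransGen (fun a b => ({a, b} : Finset (Fin n)) ∈ K) u v

/-- `K` is Gorenstein* over `k`; by Stanley's topological characterization
this means that `K` is a `k`-homology sphere: for every face `F` the link of
`F` has vanishing reduced homology below dimension `dim K - |F|` and reduced
homology isomorphic to `k` in dimension `dim K - |F|`. -/
def IsGorensteinStar (K : Finset (Finset (Fin n))) : Prop :=
  IsComplex K ∧
  (∀ F ∈ K, ∀ i : ℤ, i < dimOf K - F.card → ¬ homNonzero k (link K F) i) ∧
  (∀ F ∈ K, homIsK k (link K F) (dimOf K - F.card))


section ChainOps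


variable (k : Type) [Field k]

/-- global sign -/
noncomputable def sgn (G : Finset (Fin n)) (v : Fin n) : k :=
  (-1) ^ (G.filter fun w => w < v).card

/-- global boundary operator -/
noncomputable def Dop (x : Finset (Fin n) → k) : Finset (Fin n) → k :=
  fun G => ∑ v : Fin n, if v ∈ G then 0 else sgn k G v * x (insert v G)

lemma sgn_mul_self (G : Finset (Fin n)) (v : Fin n) :
    sgn k G v * sgn k G v = 1 := by
  unfold sgn
  rw [← pow_add, ← two_mul, pow_mul]
  norm_num

lemma sgn_insert (G : Finset (Fin n)) {w : Fin n} (hw : w ∉ G) (v : Fin n) :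
    sgn k (insert w G) v = (if w < v then (-1 : k) else 1) * sgn k G v := by
  unfold sgn
  by_cases h : w < v
  · rw [Finset.filter_insert, if_pos h, Finset.card_insert_of_notMem (by
      simp [Finset.mem_filter, hw])]
    rw [if_pos h, pow_succ]
    ring
  · rw [Finset.filter_insert, if_neg h, if_neg h, one_mul]

/-- the key anticommutation identity -/
lemma sgn_swap (G : Finset (Fin n)) {v w : Fin n} (hv : v ∉ G) (hw : w ∉ G)
    (hvw : v ≠ w) :
    sgn k G v * sgn k (insert v G) w = -(sgn k G w * sgn k (insert w G) v) := by
  rw [sgn_insert k G hv w, sgn_insert k G hw v]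
  rcases lt_or_gt_of_ne hvw with h | h
  · rw [if_pos h, if_neg (asymm h)]; ring
  · rw [if_neg (asymm h), if_pos h]; ring

lemma Dop_add (x y : Finset (Fin n) → k) :
    Dop k (x + y) = Dop k x + Dop k y := by
  funext G
  simp only [Dop, Pi.add_apply, ← Finset.sum_add_distrib]
  refine Finset.sum_congr rfl fun v _ => ?_
  split_ifs <;> ring

lemma Dop_smul (a : k) (x : Finset (Fin n) → k) :
    Dop k (a • x) = a • Dop k x := by
  funext G
  simp only [Dop, Pi.smul_apply, smul_eq_mul, Finset.mul_sum]
  refine Finset.sum_congr rfl fun v _ => ?_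
  split_ifs <;> ring

lemma Dop_zero : Dop k (0 : Finset (Fin n) → k) = 0 := by
  funext G; simp [Dop]

lemma Dop_sub (x y : Finset (Fin n) → k) :
    Dop k (x - y) = Dop k x - Dop k y := by
  funext G
  simp only [Dop, Pi.sub_apply, ← Finset.sum_sub_distrib]
  refine Finset.sum_congr rfl fun v _ => ?_
  split_ifs <;> ring

lemma Dop_Dop (x : Finset (Fin n) → k) : Dop k (Dop k x) = 0 := by
  funext G
  show (∑ v : Fin n, if v ∈ G then 0 else sgn k G v * Dop k x (insert v G)) = 0
  have : ∀ v : Fin n, (if v ∈ G then 0 else sgn k G v * Dop k x (insert v G))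
      = ∑ w : Fin n, (if v ∈ G then 0 else if w ∈ insert v G then 0 else
          sgn k G v * (sgn k (insert v G) w * x (insert w (insert v G)))) := by
    intro v
    by_cases hv : v ∈ G
    · simp [hv]
    · simp only [if_neg hv, Dop, Finset.mul_sum]
      refine Finset.sum_congr rfl fun w _ => ?_
      split_ifs <;> ring
  rw [Finset.sum_congr rfl (fun v _ => this v), ← Finset.sum_product']
  apply Finset.sum_involution (fun p _ => (p.2, p.1))
  · rintro ⟨v, w⟩ _
    dsimp only
    by_cases hv : v ∈ G
    · by_cases hw : w ∈ G <;> simp [hv, hw, Finset.mem_insert]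
    · by_cases hw : w ∈ G
      · simp [hv, hw, Finset.mem_insert]
      · by_cases hvw : v = w
        · subst hvw; simp
        · rw [if_neg hv, if_neg hw,
            if_neg (by simp [Finset.mem_insert, hw, Ne.symm hvw]),
            if_neg (by simp [Finset.mem_insert, hv, hvw])]
          rw [Finset.insert_comm w v G]
          have hs := sgn_swap k G hv hw hvw
          have h2 : sgn k G v * (sgn k (insert v G) w * x (insert v (insert w G)))
              = (sgn k G v * sgn k (insert v G) w) * x (insert v (insert w G)) := by ring
          rw [h2, hs]
          ring
  · rintro ⟨v, w⟩ _ h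
    dsimp only
    intro he
    have h2 : v = w := (congrArg Prod.snd he : _)
    subst h2
    apply h
    by_cases hv : v ∈ G
    · simp [hv]
    · simp [hv, Finset.mem_insert]
  · rintro ⟨v, w⟩ _; exact Finset.mem_univ _
  · rintro ⟨v, w⟩ _; rfl

end ChainOps

section Bridge

variable (k : Type) [Field k]

/-- `x` is supported on faces of `K` with `j` vertices -/
def suppOn (K : Finset (Finset (Fin n))) (j : ℕ) (x : Finset (Fin n) → k) : Prop :=
  ∀ F, x F ≠ 0 → F ∈ K ∧ F.card = j

lemma suppOn_ext (K : Finset (Finset (Fin n))) (j : ℕ) (c : chain k K j) :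
    suppOn k K j (ext k K j c) := by
  intro F hF
  by_contra h
  exact hF (dif_neg h)

lemma suppOn_zero (K : Finset (Finset (Fin n))) (j : ℕ) :
    suppOn k K j (0 : Finset (Fin n) → k) := fun F hF => absurd rfl hF

lemma bdry_eq_Dop (K : Finset (Finset (Fin n))) (j : ℕ) (c : chain k K j) :
    bdry k K j c = Dop k (ext k K j c) := by
  funext G
  unfold bdry Dop
  refine Finset.sum_congr rfl fun v _ => ?_
  by_cases hv : v ∈ G
  · rw [dif_neg (by tauto), if_pos hv]
  · rw [if_neg hv]
    by_cases h2 : insert v G ∈ K ∧ (insert v G).card = j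
    · rw [dif_pos ⟨hv, h2⟩]
      show _ = _ * ext k K j c (insert v G)
      rw [ext, dif_pos h2]
      rfl
    · rw [dif_neg (by tauto)]
      show (0 : k) = _ * ext k K j c (insert v G)
      rw [ext, dif_neg h2, mul_zero]

lemma exists_chain_of_suppOn {K : Finset (Finset (Fin n))} {j : ℕ}
    {x : Finset (Fin n) → k} (hx : suppOn k K j x) :
    ∃ c : chain k K j, ext k K j c = x := by
  refine ⟨fun F => x F.1, ?_⟩
  funext F
  rw [ext]
  split_ifs with h
  · rfl
  · by_contra hne
    exact h (hx F fun h0 => hne h0.symm)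

lemma suppOn_Dop {K : Finset (Finset (Fin n))} (hK : IsComplex K) {j : ℕ}
    {x : Finset (Fin n) → k} (hx : suppOn k K j x) :
    ∀ G, Dop k x G ≠ 0 → G ∈ K ∧ G.card + 1 = j := by
  intro G hG
  rw [Dop] at hG
  obtain ⟨v, -, hv⟩ := Finset.exists_ne_zero_of_sum_ne_zero hG
  have hvG : v ∉ G := fun h => hv (if_pos h)
  rw [if_neg hvG] at hv
  have hxi : x (insert v G) ≠ 0 := fun h => hv (by rw [h, mul_zero])
  obtain ⟨hmem, hcard⟩ := hx _ hxi
  exact ⟨hK.2 _ hmem _ (Finset.subset_insert v G),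
    by rw [← hcard, Finset.card_insert_of_notMem hvG]⟩

lemma homNonzero_iff' (K : Finset (Finset (Fin n))) (p : ℤ) :
    homNonzero k K p ↔ ∃ j : ℕ, (j:ℤ) = p + 1 ∧
      ∃ x : Finset (Fin n) → k, suppOn k K j x ∧ Dop k x = 0 ∧
        ∀ y : Finset (Fin n) → k, suppOn k K (j+1) y → Dop k y ≠ x := by
  constructor
  · rintro ⟨j, hj, c, hc, hb⟩
    refine ⟨j, hj, ext k K j c, suppOn_ext k K j c, by rw [← bdry_eq_Dop, hc], ?_⟩
    intro y hy hDy
    obtain ⟨b, hbe⟩ := exists_chain_of_suppOn k hy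
    exact hb b (by rw [bdry_eq_Dop, hbe, hDy])
  · rintro ⟨j, hj, x, hx, hc, hb⟩
    obtain ⟨c, hce⟩ := exists_chain_of_suppOn k hx
    refine ⟨j, hj, c, by rw [bdry_eq_Dop, hce, hc], ?_⟩
    intro b hbe
    rw [bdry_eq_Dop, hce] at hbe
    exact hb _ (suppOn_ext k K (j+1) b) hbe

lemma not_hom_boundary {K : Finset (Finset (Fin n))} {s : ℕ}
    (h : ¬ homNonzero k K ((s:ℤ) - 1)) {x : Finset (Fin n) → k}
    (hx : suppOn k K s x) (hc : Dop k x = 0) :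
    ∃ y, suppOn k K (s+1) y ∧ Dop k y = x := by
  by_contra hno
  push_neg at hno
  exact h ((homNonzero_iff' k K _).2 ⟨s, by ring, x, hx, hc,
    fun y hy hD => (hno y hy) hD⟩)

lemma high_vanish {K : Finset (Finset (Fin n))} {p : ℤ}
    (h : ∀ F ∈ K, (F.card : ℤ) ≠ p + 1) : ¬ homNonzero k K p := by
  rw [homNonzero_iff' k K p]
  rintro ⟨j, hj, x, hx, -, hb⟩
  have hx0 : x = 0 := by
    funext F
    by_contra h0
    obtain ⟨hm, hcard⟩ := hx F h0
    exact h F hm (by rw [hcard, hj])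
  exact hb 0 (suppOn_zero k K _) (by rw [Dop_zero, hx0])

lemma neg_vanish {K : Finset (Finset (Fin n))} {p : ℤ} (hp : p < -1) :
    ¬ homNonzero k K p := by
  rintro ⟨j, hj, -⟩
  omega

end Bridge

section Homotopy

variable (k : Type) [Field k]

/-- cone-style shift operator -/
noncomputable def vshift (v : Fin n) (x : Finset (Fin n) → k) : Finset (Fin n) → k :=
  fun F => if v ∈ F then sgn k (F.erase v) v * x (F.erase v) else 0

lemma sgn_cross {G' : Finset (Fin n)} {v w : Fin n} (hv : v ∉ G') (hw : w ∉ G')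
    (hvw : v ≠ w) :
    sgn k (insert v G') w * sgn k (insert w G') v = -(sgn k G' v * sgn k G' w) := by
  rw [sgn_insert k G' hv w, sgn_insert k G' hw v]
  rcases lt_or_gt_of_ne hvw with h | h
  · rw [if_pos h, if_neg (asymm h)]; ring
  · rw [if_neg (asymm h), if_pos h]; ring

lemma Dop_vshift_not_mem {v : Fin n} (x : Finset (Fin n) → k) {G : Finset (Fin n)}
    (hv : v ∉ G) : Dop k (vshift k v x) G = x G := by
  rw [Dop]
  rw [Finset.sum_eq_single_of_mem v (Finset.mem_univ v)]
  · rw [if_neg hv, vshift, if_pos (Finset.mem_insert_self v G),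
      Finset.erase_insert hv, ← mul_assoc, sgn_mul_self, one_mul]
  · intro w _ hwv
    by_cases hw : w ∈ G
    · rw [if_pos hw]
    · rw [if_neg hw, vshift,
        if_neg (by simp [Finset.mem_insert, hwv.symm, hv]), mul_zero]

lemma Dop_vshift_mem {v : Fin n} (x : Finset (Fin n) → k) {G : Finset (Fin n)}
    (hv : v ∈ G) :
    Dop k (vshift k v x) G
      = x G - sgn k (G.erase v) v * Dop k x (G.erase v) := by
  set G' := G.erase v with hG'
  have hvG' : v ∉ G' := Finset.notMem_erase v G
  have hins : insert v G' = G := Finset.insert_erase hv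
  have hR : Dop k x G' = sgn k G' v * x G +
      ∑ w ∈ Finset.univ.erase v, (if w ∈ G' then 0 else sgn k G' w * x (insert w G')) := by
    rw [Dop, ← Finset.add_sum_erase _ _ (Finset.mem_univ v), if_neg hvG', hins]
  have hL : Dop k (vshift k v x) G
      = ∑ w ∈ Finset.univ.erase v, (if w ∈ G then 0 else sgn k G w * vshift k v x (insert w G)) := by
    rw [Dop, ← Finset.add_sum_erase _ _ (Finset.mem_univ v), if_pos hv, zero_add]
  have hterm : ∀ w ∈ Finset.univ.erase v,
      (if w ∈ G then 0 else sgn k G w * vshift k v x (insert w G))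
        = -(sgn k G' v) * (if w ∈ G' then 0 else sgn k G' w * x (insert w G')) := by
    intro w hw
    have hwv : w ≠ v := (Finset.mem_erase.1 hw).1
    by_cases hwG : w ∈ G
    · rw [if_pos hwG, if_pos (Finset.mem_erase.2 ⟨hwv, hwG⟩), mul_zero]
    · have hwG' : w ∉ G' := fun h => hwG (Finset.mem_of_mem_erase h)
      rw [if_neg hwG, if_neg hwG', vshift,
        if_pos (Finset.mem_insert_of_mem hv)]
      have herase : (insert w G).erase v = insert w G' := by
        rw [hG', Finset.erase_insert_of_ne hwv]
      rw [herase]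
      have hsg : sgn k G w * sgn k (insert w G') v
          = -(sgn k G' v * sgn k G' w) := by
        rw [← hins]
        exact sgn_cross k hvG' hwG' (fun h => hwv h.symm)
      calc sgn k G w * (sgn k (insert w G') v * x (insert w G'))
          = (sgn k G w * sgn k (insert w G') v) * x (insert w G') := by ring
        _ = -(sgn k G' v * sgn k G' w) * x (insert w G') := by rw [hsg]
        _ = -(sgn k G' v) * (sgn k G' w * x (insert w G')) := by ring
  rw [hL, Finset.sum_congr rfl hterm, ← Finset.mul_sum]
  have : ∑ w ∈ Finset.univ.erase v, (if w ∈ G' then 0 else sgn k G' w * x (insert w G'))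
      = Dop k x G' - sgn k G' v * x G := by rw [hR]; ring
  rw [this]
  have hs := sgn_mul_self k G' v
  calc -(sgn k G' v) * (Dop k x G' - sgn k G' v * x G)
      = (sgn k G' v * sgn k G' v) * x G - sgn k G' v * Dop k x G' := by ring
    _ = x G - sgn k G' v * Dop k x G' := by rw [hs, one_mul]

/-- projection to the link of a vertex -/
noncomputable def lkproj (v : Fin n) (x : Finset (Fin n) → k) : Finset (Fin n) → k :=
  fun F => if v ∈ F then 0 else sgn k F v * x (insert v F)

lemma Dop_lkproj {v : Fin n} (x : Finset (Fin n) → k) (G : Finset (Fin n)) :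
    Dop k (lkproj k v x) G
      = if v ∈ G then 0 else -(sgn k G v * Dop k x (insert v G)) := by
  by_cases hv : v ∈ G
  · rw [if_pos hv, Dop]
    apply Finset.sum_eq_zero
    intro w _
    by_cases hw : w ∈ G
    · rw [if_pos hw]
    · rw [if_neg hw, lkproj, if_pos (Finset.mem_insert_of_mem hv), mul_zero]
  · rw [if_neg hv, Dop, Dop, Finset.mul_sum, ← Finset.sum_neg_distrib]
    refine Finset.sum_congr rfl fun w _ => ?_
    by_cases hwv : w = v
    · subst hwv
      rw [if_neg hv, if_pos (Finset.mem_insert_self w G), lkproj,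
        if_pos (Finset.mem_insert_self w G), mul_zero, neg_zero]
    · by_cases hw : w ∈ G
      · rw [if_pos hw, if_pos (Finset.mem_insert_of_mem hw), mul_zero, neg_zero]
      · rw [if_neg hw, if_neg (by simp [Finset.mem_insert, hwv, hw]), lkproj,
          if_neg (by simp [Finset.mem_insert, Ne.symm hwv, hv])]
        rw [Finset.insert_comm v w G]
        have hsg := sgn_swap k G hv hw (Ne.symm hwv)
        calc sgn k G w * (sgn k (insert w G) v * x (insert w (insert v G)))
            = -(-(sgn k G w * sgn k (insert w G) v)) * x (insert w (insert v G)) := by ring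
          _ = -(sgn k G v * sgn k (insert v G) w) * x (insert w (insert v G)) := by
              rw [← hsg]
          _ = -(sgn k G v * (sgn k (insert v G) w * x (insert w (insert v G)))) := by ring

end Homotopy

section Vanish

variable (k : Type) [Field k]

lemma suppOn_add {K : Finset (Finset (Fin n))} {j : ℕ} {x y : Finset (Fin n) → k}
    (hx : suppOn k K j x) (hy : suppOn k K j y) : suppOn k K j (x + y) := by
  intro F hF
  by_cases h : x F = 0
  · exact hy F (fun h0 => hF (by show x F + y F = 0; rw [h, h0, add_zero]))
  · exact hx F h

lemma suppOn_sub {K : Finset (Finset (Fin n))} {j : ℕ} {x y : Finset (Fin n) → k}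
    (hx : suppOn k K j x) (hy : suppOn k K j y) : suppOn k K j (x - y) := by
  intro F hF
  by_cases h : x F = 0
  · refine hy F (fun h0 => hF ?_)
    show x F - y F = 0
    rw [h, h0, sub_zero]
  · exact hx F h

lemma suppOn_neg {K : Finset (Finset (Fin n))} {j : ℕ} {x : Finset (Fin n) → k}
    (hx : suppOn k K j x) : suppOn k K j (-x) := by
  intro F hF
  exact hx F (fun h0 => hF (by show -(x F) = 0; rw [h0, neg_zero]))

lemma suppOn_mono {K K' : Finset (Finset (Fin n))} (hKK : K' ⊆ K) {j : ℕ}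
    {x : Finset (Fin n) → k} (hx : suppOn k K' j x) : suppOn k K j x :=
  fun F hF => ⟨hKK (hx F hF).1, (hx F hF).2⟩

lemma Dop_neg (x : Finset (Fin n) → k) : Dop k (-x) = -Dop k x := by
  have h := Dop_sub k 0 x
  rw [zero_sub, Dop_zero, zero_sub] at h
  exact h

/-- a cone is acyclic -/
lemma cone_vanish {K : Finset (Finset (Fin n))} (hK : IsComplex K) {v : Fin n}
    (hcone : ∀ F ∈ K, insert v F ∈ K) (p : ℤ) : ¬ homNonzero k K p := by
  rw [homNonzero_iff']
  rintro ⟨j, hj, x, hx, hcyc, hb⟩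
  refine hb (vshift k v x) ?_ ?_
  · intro F hF
    have hvF : v ∈ F := by
      by_contra h
      exact hF (by rw [vshift, if_neg h])
    have hxe : x (F.erase v) ≠ 0 := by
      intro h0
      exact hF (by rw [vshift, if_pos hvF, h0, mul_zero])
    obtain ⟨hmem, hcard⟩ := hx _ hxe
    have hFe : F = insert v (F.erase v) := (Finset.insert_erase hvF).symm
    constructor
    · rw [hFe]; exact hcone _ hmem
    · rw [← Finset.card_erase_add_one hvF, hcard]
  · funext G
    by_cases hv : v ∈ G
    · rw [Dop_vshift_mem k x hv, hcyc]
      show x G - _ * (0 : Finset (Fin n) → k) (G.erase v) = x G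
      rw [Pi.zero_apply, mul_zero, sub_zero]
    · exact Dop_vshift_not_mem k x hv

/-- if K has a vertex then reduced H_{-1} vanishes -/
lemma vertex_vanish {K : Finset (Finset (Fin n))} (hK : IsComplex K) {v : Fin n}
    (hv : {v} ∈ K) : ¬ homNonzero k K (-1) := by
  rw [homNonzero_iff']
  rintro ⟨j, hj, x, hx, hcyc, hb⟩
  have hj0 : j = 0 := by omega
  subst hj0
  refine hb (fun F => if F = {v} then x ∅ else 0) ?_ ?_
  · intro F hF
    have : F = {v} := by
      by_contra h
      exact hF (if_neg h)
    rw [this]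
    exact ⟨hv, Finset.card_singleton v⟩
  · funext G
    by_cases hG : G = ∅
    · subst hG
      rw [Dop, Finset.sum_eq_single_of_mem v (Finset.mem_univ v)]
      · rw [if_neg (Finset.notMem_empty v)]
        have h1 : insert v ∅ = ({v} : Finset (Fin n)) := rfl
        rw [h1, if_pos rfl]
        have h2 : sgn k ∅ v = 1 := by
          rw [sgn, Finset.filter_empty, Finset.card_empty, pow_zero]
        rw [h2, one_mul]
      · intro w _ hwv
        rw [if_neg (Finset.notMem_empty w)]
        have : insert w ∅ ≠ ({v} : Finset (Fin n)) := by
          intro h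
          exact hwv (by
            have : w ∈ ({v} : Finset (Fin n)) := h ▸ Finset.mem_insert_self w ∅
            simpa using this)
        rw [if_neg this, mul_zero]
    · have hxG : x G = 0 := by
        by_contra h0
        have := (hx G h0).2
        exact hG (Finset.card_eq_zero.1 this)
      rw [hxG, Dop]
      apply Finset.sum_eq_zero
      intro w _
      by_cases hwG : w ∈ G
      · rw [if_pos hwG]
      · rw [if_neg hwG]
        have : insert w G ≠ ({v} : Finset (Fin n)) := by
          intro h
          have hGv : G ⊆ {v} := h ▸ Finset.subset_insert w G
          have hwv : w = v := by
            have : w ∈ ({v} : Finset (Fin n)) := h ▸ Finset.mem_insert_self w G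
            simpa using this
          rcases Finset.subset_singleton_iff.1 hGv with h1 | h1
          · exact hG h1
          · exact hwG (by rw [h1, hwv]; exact Finset.mem_singleton_self v)
        rw [if_neg this, mul_zero]

/-- the Mayer-Vietoris chase -/
lemma mv_step {K : Finset (Finset (Fin n))} (hK : IsComplex K) (v : Fin n) (s : ℕ)
    (hlk : ¬ homNonzero k (link K {v}) ((s:ℤ) - 1))
    (hdel : ¬ homNonzero k (induced K ({v}ᶜ : Finset (Fin n))) (s:ℤ)) :
    ¬ homNonzero k K (s:ℤ) := by
  rw [homNonzero_iff']
  rintro ⟨j, hj, x, hx, hcyc, hb⟩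
  have hjs : j = s + 1 := by omega
  subst hjs
  -- the projected cycle in the link
  set z := lkproj k v x with hz
  have hzsupp : suppOn k (link K {v}) s z := by
    intro F hF
    have hvF : v ∉ F := by
      intro h
      exact hF (by rw [hz, lkproj, if_pos h])
    have hxe : x (insert v F) ≠ 0 := by
      intro h0
      exact hF (by rw [hz, lkproj, if_neg hvF, h0, mul_zero])
    obtain ⟨hmem, hcard⟩ := hx _ hxe
    have hFK : F ∈ K := hK.2 _ hmem _ (Finset.subset_insert v F)
    have hcardF : F.card = s := by
      have := Finset.card_insert_of_notMem hvF
      omega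
    refine ⟨Finset.mem_filter.2 ⟨hFK, ?_, ?_⟩, hcardF⟩
    · exact Finset.singleton_inter_of_notMem hvF
    · show insert v F ∈ K; exact hmem
  have hzcyc : Dop k z = 0 := by
    funext G
    rw [hz, Dop_lkproj]
    by_cases hvG : v ∈ G
    · rw [if_pos hvG]; rfl
    · rw [if_neg hvG, hcyc]
      show -(_ * (0 : Finset (Fin n) → k) (insert v G)) = 0
      rw [Pi.zero_apply, mul_zero, neg_zero]
  obtain ⟨β, hβsupp, hβD⟩ := not_hom_boundary k hlk hzsupp hzcyc
  -- β vanishes on faces containing v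
  have hβv : ∀ F, v ∈ F → β F = 0 := by
    intro F hvF
    by_contra h0
    have := (hβsupp F h0).1
    have := (Finset.mem_filter.1 this).2.1
    have hvin : v ∈ {v} ∩ F := Finset.mem_inter.2 ⟨Finset.mem_singleton_self v, hvF⟩
    rw [this] at hvin
    exact Finset.notMem_empty v hvin
  -- the correcting chain
  set bt := -(vshift k v β) with hbt
  have hbtsupp : suppOn k K (s + 1 + 1) bt := by
    intro F hF
    have hF' : vshift k v β F ≠ 0 := by
      intro h0
      exact hF (by rw [hbt]; show -(vshift k v β F) = 0; rw [h0, neg_zero])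
    have hvF : v ∈ F := by
      by_contra h
      exact hF' (by rw [vshift, if_neg h])
    have hβe : β (F.erase v) ≠ 0 := by
      intro h0
      exact hF' (by rw [vshift, if_pos hvF, h0, mul_zero])
    obtain ⟨hmem, hcard⟩ := hβsupp _ hβe
    have hmem' := Finset.mem_filter.1 hmem
    have hFK : F ∈ K := by
      have : insert v (F.erase v) ∈ K := hmem'.2.2
      rwa [Finset.insert_erase hvF] at this
    exact ⟨hFK, by rw [← Finset.card_erase_add_one hvF, hcard]⟩
  have hbtD : ∀ G, v ∈ G → Dop k bt G = x G := by
    intro G hvG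
    rw [hbt, Dop_neg]
    show -(Dop k (vshift k v β) G) = x G
    rw [Dop_vshift_mem k β hvG, hβv G hvG, hβD]
    have hvG' : v ∉ G.erase v := Finset.notMem_erase v G
    rw [hz, lkproj, if_neg hvG', Finset.insert_erase hvG]
    rw [← mul_assoc, sgn_mul_self, one_mul]
    ring
  -- the deleted part
  set x' := x - Dop k bt with hx'
  have hDbt_supp : suppOn k K (s+1) (Dop k bt) := by
    intro G hG
    obtain ⟨h1, h2⟩ := suppOn_Dop k hK hbtsupp G hG
    exact ⟨h1, by omega⟩
  have hx'supp : suppOn k (induced K ({v}ᶜ : Finset (Fin n))) (s+1) x' := by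
    intro F hF
    have hsub : suppOn k K (s+1) x' := suppOn_sub k hx hDbt_supp
    obtain ⟨hFK, hcard⟩ := hsub F hF
    have hvF : v ∉ F := by
      intro hvF
      apply hF
      show x F - Dop k bt F = 0
      rw [hbtD F hvF, sub_self]
    refine ⟨Finset.mem_filter.2 ⟨hFK, fun u hu => ?_⟩, hcard⟩
    rw [Finset.mem_compl, Finset.mem_singleton]
    intro h
    exact hvF (h ▸ hu)
  have hx'cyc : Dop k x' = 0 := by
    rw [hx', Dop_sub, Dop_Dop, sub_zero, hcyc]
  obtain ⟨y, hysupp, hyD⟩ := not_hom_boundary k (by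
    have : ((s+1 : ℕ) : ℤ) - 1 = (s : ℤ) := by push_cast; ring
    rw [this]; exact hdel) hx'supp hx'cyc
  refine hb (y + bt) ?_ ?_
  · exact suppOn_add k (suppOn_mono k (Finset.filter_subset _ K) hysupp) hbtsupp
  · rw [Dop_add, hyD, hx']
    funext G
    show x G - Dop k bt G + Dop k bt G = x G
    ring

end Vanish

section Matroid

/-- rank of a subset of the vertex set -/
noncomputable def rk (K : Finset (Finset (Fin n))) (W : Finset (Fin n)) : ℕ :=
  (induced K W).sup Finset.card

/-- matroid property in augmentation form -/
def Mat (K : Finset (Finset (Fin n))) : Prop :=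
  IsComplex K ∧ ∀ W : Finset (Fin n), ∀ F ∈ K, F ⊆ W → F.card < rk K W →
    ∃ v ∈ W, v ∉ F ∧ insert v F ∈ K

lemma mem_induced {K : Finset (Finset (Fin n))} {W F : Finset (Fin n)} :
    F ∈ induced K W ↔ F ∈ K ∧ F ⊆ W := Finset.mem_filter

lemma card_le_rk {K : Finset (Finset (Fin n))} {W F : Finset (Fin n)}
    (hF : F ∈ K) (hFW : F ⊆ W) : F.card ≤ rk K W :=
  Finset.le_sup (mem_induced.2 ⟨hF, hFW⟩)

lemma rk_le_card (K : Finset (Finset (Fin n))) (W : Finset (Fin n)) :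
    rk K W ≤ W.card :=
  Finset.sup_le fun F hF => Finset.card_le_card (mem_induced.1 hF).2

lemma rk_mono (K : Finset (Finset (Fin n))) {W W' : Finset (Fin n)} (h : W ⊆ W') :
    rk K W ≤ rk K W' :=
  Finset.sup_le fun F hF => card_le_rk (mem_induced.1 hF).1 ((mem_induced.1 hF).2.trans h)

lemma exists_basis {K : Finset (Finset (Fin n))} (hK : IsComplex K)
    (W : Finset (Fin n)) : ∃ B, B ∈ K ∧ B ⊆ W ∧ B.card = rk K W := by
  have hne : (induced K W).Nonempty :=
    ⟨∅, mem_induced.2 ⟨hK.1, Finset.empty_subset W⟩⟩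
  obtain ⟨B, hB, hBc⟩ := Finset.exists_mem_eq_sup (induced K W) hne Finset.card
  exact ⟨B, (mem_induced.1 hB).1, (mem_induced.1 hB).2, hBc.symm⟩

lemma induced_induced (K : Finset (Finset (Fin n))) (W U : Finset (Fin n)) :
    induced (induced K W) U = induced K (W ∩ U) := by
  unfold induced
  rw [Finset.filter_filter]
  apply Finset.filter_congr
  intro F _
  constructor
  · rintro ⟨h1, h2⟩; exact Finset.subset_inter h1 h2
  · intro h; exact ⟨h.trans Finset.inter_subset_left, h.trans Finset.inter_subset_right⟩

lemma rk_induced (K : Finset (Finset (Fin n))) (W U : Finset (Fin n)) :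
    rk (induced K W) U = rk K (W ∩ U) := by
  unfold rk
  rw [induced_induced]

lemma isComplex_induced {K : Finset (Finset (Fin n))} (hK : IsComplex K)
    (W : Finset (Fin n)) : IsComplex (induced K W) := by
  constructor
  · exact mem_induced.2 ⟨hK.1, Finset.empty_subset W⟩
  · intro F hF G hGF
    obtain ⟨h1, h2⟩ := mem_induced.1 hF
    exact mem_induced.2 ⟨hK.2 F h1 G hGF, hGF.trans h2⟩

lemma dimOf_induced (K : Finset (Finset (Fin n))) (W : Finset (Fin n)) :
    dimOf (induced K W) = (rk K W : ℤ) - 1 := rfl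

lemma mat_of_pure {K : Finset (Finset (Fin n))} (hK : IsComplex K)
    (hmat : ∀ W : Finset (Fin n), IsPure (induced K W)) : Mat K := by
  refine ⟨hK, fun W F hF hFW hcard => ?_⟩
  have hFind : F ∈ induced K W := mem_induced.2 ⟨hF, hFW⟩
  by_cases hmax : ∀ G ∈ induced K W, F ⊆ G → G = F
  · have := hmat W F hFind hmax
    rw [dimOf_induced] at this
    omega
  · push_neg at hmax
    obtain ⟨G, hG, hFG, hGF⟩ := hmax
    have hss : F ⊂ G := Finset.ssubset_iff_subset_ne.2 ⟨hFG, fun h => hGF h.symm⟩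
    obtain ⟨v, hvG, hvF⟩ := Finset.exists_of_ssubset hss
    obtain ⟨hGK, hGW⟩ := mem_induced.1 hG
    refine ⟨v, hGW hvG, hvF, hK.2 G hGK _ ?_⟩
    exact Finset.insert_subset hvG hFG

lemma mat_induced {K : Finset (Finset (Fin n))} (hM : Mat K)
    (W : Finset (Fin n)) : Mat (induced K W) := by
  refine ⟨isComplex_induced hM.1 W, fun U F hF hFU hcard => ?_⟩
  rw [rk_induced] at hcard
  obtain ⟨hFK, hFW⟩ := mem_induced.1 hF
  obtain ⟨v, hvWU, hvF, hins⟩ := hM.2 (W ∩ U) F hFK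
    (Finset.subset_inter hFW hFU) hcard
  refine ⟨v, Finset.inter_subset_right hvWU, hvF, mem_induced.2 ⟨hins, ?_⟩⟩
  exact Finset.insert_subset (Finset.inter_subset_left hvWU) hFW

lemma aug2 {K : Finset (Finset (Fin n))} (hM : Mat K) {F G : Finset (Fin n)}
    (hF : F ∈ K) (hG : G ∈ K) (h : F.card < G.card) :
    ∃ v ∈ G, v ∉ F ∧ insert v F ∈ K := by
  have hrk : F.card < rk K (F ∪ G) :=
    lt_of_lt_of_le h (card_le_rk hG Finset.subset_union_right)
  obtain ⟨v, hv, hvF, hins⟩ := hM.2 (F ∪ G) F hF Finset.subset_union_left hrk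
  rcases Finset.mem_union.1 hv with h1 | h1
  · exact absurd h1 hvF
  · exact ⟨v, h1, hvF, hins⟩

lemma extend_basis {K : Finset (Finset (Fin n))} (hM : Mat K) :
    ∀ t : ℕ, ∀ F W : Finset (Fin n), F ∈ K → F ⊆ W → rk K W - F.card = t →
    ∃ B, B ∈ K ∧ F ⊆ B ∧ B ⊆ W ∧ B.card = rk K W := by
  intro t
  induction t with
  | zero =>
    intro F W hF hFW ht
    exact ⟨F, hF, Finset.Subset.refl F, hFW,
      le_antisymm (card_le_rk hF hFW) (by omega)⟩
  | succ t ih =>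
    intro F W hF hFW ht
    have hlt : F.card < rk K W := by omega
    obtain ⟨v, hvW, hvF, hins⟩ := hM.2 W F hF hFW hlt
    have hcard : (insert v F).card = F.card + 1 := Finset.card_insert_of_notMem hvF
    obtain ⟨B, hB, hFB, hBW, hBc⟩ := ih (insert v F) W hins
      (Finset.insert_subset hvW hFW) (by omega)
    exact ⟨B, hB, (Finset.subset_insert v F).trans hFB, hBW, hBc⟩

lemma extend_basis' {K : Finset (Finset (Fin n))} (hM : Mat K) {F W : Finset (Fin n)}
    (hF : F ∈ K) (hFW : F ⊆ W) :
    ∃ B, B ∈ K ∧ F ⊆ B ∧ B ⊆ W ∧ B.card = rk K W :=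
  extend_basis hM _ F W hF hFW rfl

lemma rk_erase_succ (K : Finset (Finset (Fin n))) (hK : IsComplex K)
    (W : Finset (Fin n)) (v : Fin n) : rk K W ≤ rk K (W.erase v) + 1 := by
  obtain ⟨B, hB, hBW, hBc⟩ := exists_basis hK W
  have h1 : B.erase v ∈ K := hK.2 B hB _ (Finset.erase_subset v B)
  have h2 : B.erase v ⊆ W.erase v := Finset.erase_subset_erase v hBW
  have h3 := card_le_rk h1 h2
  have h4 : B.card ≤ (B.erase v).card + 1 := by
    by_cases h : v ∈ B
    · rw [Finset.card_erase_of_mem h]; omega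
    · rw [Finset.erase_eq_of_notMem h]; omega
  omega

lemma rk_erase_le (K : Finset (Finset (Fin n))) (W : Finset (Fin n)) (v : Fin n) :
    rk K (W.erase v) ≤ rk K W := rk_mono K (Finset.erase_subset v W)

/-- a non-coloop of a subset remains a non-coloop in any superset -/
lemma ncl_mono {K : Finset (Finset (Fin n))} (hM : Mat K) {A S : Finset (Fin n)}
    (hAS : A ⊆ S) {v : Fin n} (hvA : v ∈ A)
    (h : rk K (A.erase v) = rk K A) : rk K (S.erase v) = rk K S := by
  obtain ⟨B₁, hB₁, hB₁A, hB₁c⟩ := exists_basis hM.1 (A.erase v)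
  have hB₁S : B₁ ⊆ S.erase v := hB₁A.trans (Finset.erase_subset_erase v hAS)
  obtain ⟨B₂, hB₂, hB₁B₂, hB₂S, hB₂c⟩ := extend_basis' hM hB₁ hB₁S
  refine le_antisymm (rk_erase_le K S v) ?_
  by_contra hcon
  push_neg at hcon
  have hlt : B₂.card < rk K S := by omega
  obtain ⟨u, huS, huB₂, hins⟩ := hM.2 S B₂ hB₂ (hB₂S.trans (Finset.erase_subset v S)) hlt
  by_cases huv : u = v
  · subst huv
    have h5 : insert u B₁ ∈ K := hM.1.2 _ hins _ (Finset.insert_subset_insert u hB₁B₂)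
    have h6 : insert u B₁ ⊆ A :=
      Finset.insert_subset hvA (hB₁A.trans (Finset.erase_subset u A))
    have h7 := card_le_rk h5 h6
    have h8 : (insert u B₁).card = B₁.card + 1 := by
      apply Finset.card_insert_of_notMem
      intro hc
      exact Finset.notMem_erase u A (hB₁A hc)
    omega
  · have h5 : insert u B₂ ⊆ S.erase v := by
      apply Finset.insert_subset _ hB₂S
      exact Finset.mem_erase.2 ⟨huv, huS⟩
    have h6 := card_le_rk hins h5
    have h7 : (insert u B₂).card = B₂.card + 1 := Finset.card_insert_of_notMem huB₂
    omega

lemma exists_noncoloop {K : Finset (Finset (Fin n))} (hK : IsComplex K)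
    {S : Finset (Fin n)} (h : rk K S < S.card) :
    ∃ v ∈ S, rk K (S.erase v) = rk K S := by
  obtain ⟨B, hB, hBS, hBc⟩ := exists_basis hK S
  have hne : ¬ S ⊆ B := by
    intro hc
    have := Finset.card_le_card hc
    omega
  obtain ⟨v, hvS, hvB⟩ := Finset.not_subset.1 hne
  have hBS' : B ⊆ S.erase v := fun u hu =>
    Finset.mem_erase.2 ⟨fun he => hvB (he ▸ hu), hBS hu⟩
  have := card_le_rk hB hBS'
  have := rk_erase_le K S v
  exact ⟨v, hvS, by omega⟩

/-- subsets all of whose elements are non-coloops -/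
def CFree (K : Finset (Finset (Fin n))) (W : Finset (Fin n)) : Prop :=
  ∀ w ∈ W, rk K (W.erase w) = rk K W

/-- the set of non-coloops -/
noncomputable def cycSet (K : Finset (Finset (Fin n))) (S : Finset (Fin n)) :
    Finset (Fin n) :=
  S.filter fun v => rk K (S.erase v) = rk K S

lemma cycSet_subset (K : Finset (Finset (Fin n))) (S : Finset (Fin n)) :
    cycSet K S ⊆ S := Finset.filter_subset _ S

lemma mem_cycSet {K : Finset (Finset (Fin n))} {S : Finset (Fin n)} {v : Fin n} :
    v ∈ cycSet K S ↔ v ∈ S ∧ rk K (S.erase v) = rk K S := Finset.mem_filter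

lemma subset_cycSet_of_cfree {K : Finset (Finset (Fin n))} (hM : Mat K)
    {W S : Finset (Fin n)} (hW : CFree K W) (hWS : W ⊆ S) : W ⊆ cycSet K S :=
  fun w hw => mem_cycSet.2 ⟨hWS hw, ncl_mono hM hWS hw (hW w hw)⟩

/-- existence of circuit-like subsets -/
lemma exists_cyclic {K : Finset (Finset (Fin n))} (hM : Mat K) :
    ∀ N : ℕ, ∀ S : Finset (Fin n), S.card ≤ N → ∀ v ∈ S,
    rk K (S.erase v) = rk K S → ∃ C, C ⊆ S ∧ v ∈ C ∧ CFree K C := by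
  intro N
  induction N with
  | zero =>
    intro S hS v hv _
    have h0 : S = ∅ := Finset.card_eq_zero.1 (Nat.le_zero.1 hS)
    rw [h0] at hv
    exact absurd hv (Finset.notMem_empty v)
  | succ N ih =>
    intro S hS v hv hrk
    by_cases hall : CFree K S
    · exact ⟨S, Finset.Subset.refl S, hv, hall⟩
    · rw [CFree] at hall
      push_neg at hall
      obtain ⟨w, hwS, hw⟩ := hall
      have hwv : w ≠ v := fun h => hw (h ▸ hrk)
      -- w is a coloop of S
      have hble := rk_erase_le K S w
      have hbge := rk_erase_succ K hM.1 S w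
      have hwrk : rk K (S.erase w) + 1 = rk K S := by omega
      -- v remains a non-coloop of S.erase w
      have h1 : rk K ((S.erase w).erase v) = rk K (S.erase w) := by
        have ha : (S.erase w).erase v = (S.erase v).erase w := by
          ext u; simp only [Finset.mem_erase]; tauto
        have hb : rk K (S.erase v) ≤ rk K ((S.erase v).erase w) + 1 :=
          rk_erase_succ K hM.1 _ w
        have hc : rk K ((S.erase w).erase v) ≤ rk K (S.erase w) :=
          rk_erase_le K _ v
        rw [ha]
        rw [ha] at hc
        omega
      have hcard : (S.erase w).card ≤ N := by
        rw [Finset.card_erase_of_mem hwS]; omega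
      obtain ⟨C, hCS, hvC, hCfree⟩ := ih (S.erase w) hcard v
        (Finset.mem_erase.2 ⟨fun h => hwv h.symm, hv⟩) h1
      exact ⟨C, hCS.trans (Finset.erase_subset w S), hvC, hCfree⟩

/-- the set of non-coloops is coloop-free -/
lemma cycSet_cfree {K : Finset (Finset (Fin n))} (hM : Mat K)
    (S : Finset (Fin n)) : CFree K (cycSet K S) := by
  intro w hw
  obtain ⟨hwS, hwrk⟩ := mem_cycSet.1 hw
  obtain ⟨C, hCS, hwC, hCfree⟩ := exists_cyclic hM S.card S le_rfl w hwS hwrk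
  have hCcyc : C ⊆ cycSet K S := subset_cycSet_of_cfree hM hCfree hCS
  exact ncl_mono hM hCcyc hwC (hCfree w hwC)

lemma cycSet_erase_coloop {K : Finset (Finset (Fin n))} (hM : Mat K)
    {S : Finset (Fin n)} {v : Fin n} (hv : v ∈ S)
    (hco : rk K (S.erase v) + 1 = rk K S) :
    cycSet K (S.erase v) = cycSet K S := by
  ext w
  simp only [mem_cycSet, Finset.mem_erase]
  constructor
  · rintro ⟨⟨hwv, hwS⟩, hrk⟩
    exact ⟨hwS, ncl_mono hM (Finset.erase_subset v S)
      (Finset.mem_erase.2 ⟨hwv, hwS⟩) hrk⟩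
  · rintro ⟨hwS, hrk⟩
    have hwv : w ≠ v := by
      intro h
      subst h
      omega
    refine ⟨⟨hwv, hwS⟩, ?_⟩
    have ha : (S.erase v).erase w = (S.erase w).erase v := by
      ext u; simp only [Finset.mem_erase]; tauto
    have hb : rk K (S.erase w) ≤ rk K ((S.erase w).erase v) + 1 :=
      rk_erase_succ K hM.1 _ v
    have hc : rk K ((S.erase v).erase w) ≤ rk K (S.erase v) :=
      rk_erase_le K _ w
    rw [ha]
    rw [ha] at hc
    omega

/-- removing coloops does not change the nullity -/
lemma null_cycSet {K : Finset (Finset (Fin n))} (hM : Mat K) :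
    ∀ N : ℕ, ∀ S : Finset (Fin n), S.card ≤ N →
    rk K (cycSet K S) + S.card = rk K S + (cycSet K S).card := by
  intro N
  induction N with
  | zero =>
    intro S hS
    have h0 : S = ∅ := Finset.card_eq_zero.1 (by omega)
    subst h0
    have : cycSet K ∅ = ∅ := Finset.subset_empty.1 (cycSet_subset K ∅)
    rw [this]
  | succ N ih =>
    intro S hS
    by_cases hall : cycSet K S = S
    · rw [hall]
    · have hne : ∃ v ∈ S, v ∉ cycSet K S := by
        by_contra h
        push_neg at h
        exact hall (le_antisymm (cycSet_subset K S) h)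
      obtain ⟨v, hvS, hvc⟩ := hne
      have hco : rk K (S.erase v) + 1 = rk K S := by
        have h1 : rk K (S.erase v) ≠ rk K S := by
          intro h
          exact hvc (mem_cycSet.2 ⟨hvS, h⟩)
        have := rk_erase_le K S v
        have := rk_erase_succ K hM.1 S v
        omega
      have hcard : (S.erase v).card ≤ N := by
        rw [Finset.card_erase_of_mem hvS]; omega
      have := ih (S.erase v) hcard
      rw [cycSet_erase_coloop hM hvS hco] at this
      rw [Finset.card_erase_of_mem hvS] at this
      have hS1 : 1 ≤ S.card := Finset.card_pos.2 ⟨v, hvS⟩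
      omega

end Matroid

section Span

lemma rk_insert_of_basis {K : Finset (Finset (Fin n))} (hM : Mat K)
    {W B_W A : Finset (Fin n)} (hBWK : B_W ∈ K) (hBWsub : B_W ⊆ W)
    (hBWc : B_W.card = rk K W) (hA : B_W ⊆ A) {w : Fin n} (hw : w ∈ W) :
    rk K (insert w A) = rk K A := by
  by_cases hwA : w ∈ A
  · rw [Finset.insert_eq_self.2 hwA]
  refine le_antisymm ?_ (rk_mono K (Finset.subset_insert w A))
  by_contra hcon
  push_neg at hcon
  obtain ⟨F, hF, hBF, hFA, hFc⟩ := extend_basis' hM hBWK hA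
  have hlt : F.card < rk K (insert w A) := by omega
  obtain ⟨u, hu, huF, hins⟩ := hM.2 (insert w A) F hF
    (hFA.trans (Finset.subset_insert w A)) hlt
  have hu' : u = w := by
    rcases Finset.mem_insert.1 hu with h | h
    · exact h
    · exfalso
      have h5 : insert u F ⊆ A := Finset.insert_subset h hFA
      have h6 := card_le_rk hins h5
      rw [Finset.card_insert_of_notMem huF] at h6
      omega
  subst hu'
  have h6 : insert u B_W ∈ K := hM.1.2 _ hins _ (Finset.insert_subset_insert u hBF)
  have h7 : insert u B_W ⊆ W := Finset.insert_subset hw hBWsub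
  have h8 := card_le_rk h6 h7
  have h9 : (insert u B_W).card = B_W.card + 1 :=
    Finset.card_insert_of_notMem (fun hc => huF (hBF hc))
  omega

lemma rk_union_basis {K : Finset (Finset (Fin n))} (hM : Mat K)
    {W B_W : Finset (Fin n)} (hBWK : B_W ∈ K) (hBWsub : B_W ⊆ W)
    (hBWc : B_W.card = rk K W) (X : Finset (Fin n)) :
    rk K (W ∪ X) = rk K (B_W ∪ X) := by
  have key : ∀ T : Finset (Fin n), T ⊆ W → rk K (B_W ∪ X ∪ T) = rk K (B_W ∪ X) := by
    intro T
    induction T using Finset.induction_on with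
    | empty => intro _; rw [Finset.union_empty]
    | @insert w T' hwT' ih =>
      intro hT
      have hwW : w ∈ W := hT (Finset.mem_insert_self w T')
      have hT' : T' ⊆ W := (Finset.subset_insert w T').trans hT
      rw [Finset.union_insert]
      rw [rk_insert_of_basis hM hBWK hBWsub hBWc
        (Finset.subset_union_left.trans Finset.subset_union_left) hwW]
      exact ih hT'
  have hWX : W ∪ X = B_W ∪ X ∪ W := by
    ext u
    simp only [Finset.mem_union]
    have := @hBWsub u
    tauto
  rw [hWX]
  exact key W (Finset.Subset.refl W)

/-- every coloop-free set is the non-coloop set of a spanning set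
    of the right cardinality -/
lemma cfree_realized {K : Finset (Finset (Fin n))} (hM : Mat K)
    {W : Finset (Fin n)} (hW : CFree K W) :
    ∃ S : Finset (Fin n), rk K S = rk K Finset.univ ∧
      S.card + rk K W = W.card + rk K Finset.univ ∧ cycSet K S = W := by
  obtain ⟨B_W, hBWK, hBWsub, hBWc⟩ := exists_basis hM.1 W
  obtain ⟨B, hBK, hBWB, -, hBc⟩ := extend_basis' hM hBWK (Finset.subset_univ B_W)
  set S := W ∪ B with hS
  have hrkS : rk K S = rk K Finset.univ := by
    refine le_antisymm (rk_mono K (Finset.subset_univ S)) ?_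
    rw [← hBc]
    exact card_le_rk hBK Finset.subset_union_right
  have hWB : W ∩ B = B_W := by
    apply Finset.Subset.antisymm
    · intro u hu
      obtain ⟨huW, huB⟩ := Finset.mem_inter.1 hu
      by_contra huBW
      have h1 : insert u B_W ∈ K := hM.1.2 B hBK _ (Finset.insert_subset huB hBWB)
      have h2 : insert u B_W ⊆ W := Finset.insert_subset huW hBWsub
      have h3 := card_le_rk h1 h2
      rw [Finset.card_insert_of_notMem huBW] at h3
      omega
    · exact Finset.subset_inter hBWsub hBWB
  have hcard : S.card + rk K W = W.card + rk K Finset.univ := by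
    have h10 := Finset.card_union_add_card_inter W B
    rw [hWB] at h10
    rw [hS]
    omega
  refine ⟨S, hrkS, hcard, ?_⟩
  apply Finset.Subset.antisymm
  · intro v hv
    obtain ⟨hvS, hvrk⟩ := mem_cycSet.1 hv
    by_contra hvW
    rw [hS] at hvS
    have hvB : v ∈ B := by
      rcases Finset.mem_union.1 hvS with h | h
      · exact absurd h hvW
      · exact h
    have hvBW : v ∉ B_W := fun h => hvW (hBWsub h)
    have hBWe : B_W ⊆ B.erase v := fun u hu =>
      Finset.mem_erase.2 ⟨fun he => hvBW (he ▸ hu), hBWB hu⟩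
    have hSe : S.erase v = W ∪ B.erase v := by
      rw [hS]
      ext u
      simp only [Finset.mem_erase, Finset.mem_union]
      have hx : u ∈ W → u ≠ v := fun hW he => hvW (he ▸ hW)
      tauto
    have h4 : rk K (S.erase v) = rk K (B.erase v) := by
      rw [hSe, rk_union_basis hM hBWK hBWsub hBWc (B.erase v),
        Finset.union_eq_right.2 hBWe]
    have h5 : rk K (B.erase v) ≤ B.card - 1 := by
      have := rk_le_card K (B.erase v)
      rw [Finset.card_erase_of_mem hvB] at this
      exact this
    have h6 : 1 ≤ B.card := Finset.card_pos.2 ⟨v, hvB⟩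
    rw [hrkS] at hvrk
    omega
  · exact subset_cycSet_of_cfree hM hW Finset.subset_union_left

end Span

section LinkLemmas

lemma mem_link {K : Finset (Finset (Fin n))} {v : Fin n} {G : Finset (Fin n)} :
    G ∈ link K {v} ↔ G ∈ K ∧ v ∉ G ∧ insert v G ∈ K := by
  unfold link
  rw [Finset.mem_filter]
  constructor
  · rintro ⟨h1, h2, h3⟩
    refine ⟨h1, fun hv => ?_, h3⟩
    have : v ∈ {v} ∩ G := Finset.mem_inter.2 ⟨Finset.mem_singleton_self v, hv⟩
    rw [h2] at this
    exact Finset.notMem_empty v this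
  · rintro ⟨h1, h2, h3⟩
    exact ⟨h1, Finset.singleton_inter_of_notMem h2, h3⟩

lemma isComplex_link {K : Finset (Finset (Fin n))} (hK : IsComplex K) {v : Fin n}
    (hv : {v} ∈ K) : IsComplex (link K {v}) := by
  constructor
  · refine mem_link.2 ⟨hK.1, Finset.notMem_empty v, ?_⟩
    have : insert v (∅ : Finset (Fin n)) = {v} := by simp
    rw [this]
    exact hv
  · intro F hF G hGF
    obtain ⟨h1, h2, h3⟩ := mem_link.1 hF
    exact mem_link.2 ⟨hK.2 F h1 G hGF, fun h => h2 (hGF h),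
      hK.2 _ h3 _ (Finset.insert_subset_insert v hGF)⟩

lemma mat_link {K : Finset (Finset (Fin n))} (hM : Mat K) {v : Fin n}
    (hv : {v} ∈ K) : Mat (link K {v}) := by
  refine ⟨isComplex_link hM.1 hv, fun W F hF hFW hcard => ?_⟩
  obtain ⟨G, hG, hGW, hGc⟩ := exists_basis (isComplex_link hM.1 hv) W
  obtain ⟨hFK, hvF, hFiK⟩ := mem_link.1 hF
  obtain ⟨hGK, hvG, hGiK⟩ := mem_link.1 hG
  have hc1 : (insert v F).card = F.card + 1 := Finset.card_insert_of_notMem hvF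
  have hc2 : (insert v G).card = G.card + 1 := Finset.card_insert_of_notMem hvG
  obtain ⟨u, huG, huF, hins⟩ := aug2 hM hFiK hGiK (by omega)
  have huv : u ≠ v := by
    intro h
    exact huF (h ▸ Finset.mem_insert_self v F)
  have huG' : u ∈ G := by
    rcases Finset.mem_insert.1 huG with h | h
    · exact absurd h huv
    · exact h
  have huF' : u ∉ F := fun h => huF (Finset.mem_insert_of_mem h)
  refine ⟨u, hGW huG', huF', mem_link.2 ⟨?_, ?_, ?_⟩⟩
  · refine hM.1.2 _ hins _ ?_
    rw [Finset.insert_comm]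
    exact Finset.subset_insert v (insert u F)
  · intro h
    rcases Finset.mem_insert.1 h with h1 | h1
    · exact huv h1.symm
    · exact hvF h1
  · rw [Finset.insert_comm]
    exact hins

lemma rk_link_le {K : Finset (Finset (Fin n))} (hM : Mat K) {v : Fin n}
    (hv : {v} ∈ K) (U : Finset (Fin n)) :
    rk (link K {v}) U + 1 ≤ rk K Finset.univ := by
  obtain ⟨G, hG, hGU, hGc⟩ := exists_basis (isComplex_link hM.1 hv) U
  obtain ⟨-, hvG, hGiK⟩ := mem_link.1 hG
  have h1 := card_le_rk hGiK (Finset.subset_univ _)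
  rw [Finset.card_insert_of_notMem hvG] at h1
  omega

lemma rk_link_erase_ge {K : Finset (Finset (Fin n))} (hM : Mat K) {v w : Fin n}
    (hv : {v} ∈ K) (hvw : v ≠ w) {U : Finset (Fin n)} (hvU : v ∈ U)
    (hwU : w ∉ U) (hU : rk K U = rk K Finset.univ) :
    rk K Finset.univ ≤ rk (link K {v}) U + 1 := by
  have hsing : ({v} : Finset (Fin n)) ⊆ U := Finset.singleton_subset_iff.2 hvU
  obtain ⟨B, hBK, hvB, hBU, hBc⟩ := extend_basis' hM hv hsing
  have hvB' : v ∈ B := hvB (Finset.mem_singleton_self v)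
  have hBe : B.erase v ∈ link K {v} := by
    refine mem_link.2 ⟨hM.1.2 B hBK _ (Finset.erase_subset v B),
      Finset.notMem_erase v B, ?_⟩
    rw [Finset.insert_erase hvB']
    exact hBK
  have h2 : B.erase v ⊆ U := (Finset.erase_subset v B).trans hBU
  have h3 := card_le_rk (K := link K {v}) hBe h2
  rw [Finset.card_erase_of_mem hvB'] at h3
  have h4 : 1 ≤ B.card := Finset.card_pos.2 ⟨v, hvB'⟩
  omega

lemma rk_link_univ {K : Finset (Finset (Fin n))} (hM : Mat K) {v : Fin n}
    (hv : {v} ∈ K) : rk (link K {v}) Finset.univ + 1 = rk K Finset.univ := by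
  refine le_antisymm (rk_link_le hM hv Finset.univ) ?_
  have hsing : ({v} : Finset (Fin n)) ⊆ Finset.univ := Finset.subset_univ _
  obtain ⟨B, hBK, hvB, hBU, hBc⟩ := extend_basis' hM hv hsing
  have hvB' : v ∈ B := hvB (Finset.mem_singleton_self v)
  have hBe : B.erase v ∈ link K {v} := by
    refine mem_link.2 ⟨hM.1.2 B hBK _ (Finset.erase_subset v B),
      Finset.notMem_erase v B, ?_⟩
    rw [Finset.insert_erase hvB']
    exact hBK
  have h3 := card_le_rk (K := link K {v}) hBe (Finset.subset_univ _)
  rw [Finset.card_erase_of_mem hvB'] at h3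
  have h4 : 1 ≤ B.card := Finset.card_pos.2 ⟨v, hvB'⟩
  omega

lemma compl_sing (v : Fin n) : ({v} : Finset (Fin n))ᶜ = Finset.univ.erase v := by
  ext u
  simp [Finset.mem_compl, Finset.mem_erase]

lemma rk_del {K : Finset (Finset (Fin n))} (v : Fin n) (U : Finset (Fin n)) :
    rk (induced K ({v}ᶜ : Finset (Fin n))) U = rk K (U.erase v) := by
  rw [rk_induced]
  congr 1
  ext u
  simp only [Finset.mem_inter, Finset.mem_compl, Finset.mem_erase, Finset.mem_singleton]
  try tauto

set_option linter.unusedTactic false in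
/-- if v is a coloop, K is a cone over v -/
lemma coloop_cone {K : Finset (Finset (Fin n))} (hM : Mat K) {v : Fin n}
    (hco : rk K (Finset.univ.erase v) ≠ rk K Finset.univ) :
    ∀ F ∈ K, insert v F ∈ K := by
  intro F hF
  obtain ⟨B, hBK, hFB, -, hBc⟩ := extend_basis' hM hF (Finset.subset_univ F)
  have hvB : v ∈ B := by
    by_contra hvB
    have h1 : B ⊆ Finset.univ.erase v := fun u hu =>
      Finset.mem_erase.2 ⟨fun he => hvB (he ▸ hu), Finset.mem_univ u⟩
    have h2 := card_le_rk hBK h1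
    have h3 := rk_erase_le K Finset.univ v
    omega
  exact hM.1.2 B hBK _ (Finset.insert_subset hvB hFB)

end LinkLemmas

section VanishMain

variable (k : Type) [Field k]

/-- vertex set of a complex -/
noncomputable def VS (K : Finset (Finset (Fin n))) : Finset (Fin n) :=
  Finset.univ.filter fun v => {v} ∈ K

lemma mem_VS {K : Finset (Finset (Fin n))} {v : Fin n} :
    v ∈ VS K ↔ {v} ∈ K := by
  unfold VS
  rw [Finset.mem_filter]
  exact ⟨fun h => h.2, fun h => ⟨Finset.mem_univ v, h⟩⟩

lemma vertex_of_face {K : Finset (Finset (Fin n))} (hK : IsComplex K)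
    {F : Finset (Fin n)} (hF : F ∈ K) {v : Fin n} (hv : v ∈ F) : {v} ∈ K :=
  hK.2 F hF {v} (Finset.singleton_subset_iff.2 hv)

lemma rk_univ_zero {K : Finset (Finset (Fin n))} (hK : IsComplex K)
    (h : VS K = ∅) : rk K Finset.univ = 0 := by
  apply Nat.le_zero.1
  apply Finset.sup_le
  intro F hF
  obtain ⟨hFK, -⟩ := mem_induced.1 hF
  rw [Nat.le_zero, Finset.card_eq_zero]
  by_contra hne
  obtain ⟨v, hv⟩ := Finset.nonempty_iff_ne_empty.2 hne
  have : v ∈ VS K := mem_VS.2 (vertex_of_face hK hFK hv)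
  rw [h] at this
  exact Finset.notMem_empty v this

lemma exists_vertex_of_rk {K : Finset (Finset (Fin n))} (hK : IsComplex K)
    (h : 1 ≤ rk K Finset.univ) : ∃ v, v ∈ VS K := by
  obtain ⟨B, hBK, -, hBc⟩ := exists_basis hK Finset.univ
  have : B.Nonempty := Finset.card_pos.1 (by omega)
  obtain ⟨v, hv⟩ := this
  exact ⟨v, mem_VS.2 (vertex_of_face hK hBK hv)⟩

lemma VS_del_lt {K : Finset (Finset (Fin n))} {v : Fin n} (hv : {v} ∈ K) :
    (VS (induced K ({v}ᶜ : Finset (Fin n)))).card + 1 ≤ (VS K).card := by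
  have hsub : VS (induced K ({v}ᶜ : Finset (Fin n))) ⊆ (VS K).erase v := by
    intro u hu
    have h1 := mem_VS.1 hu
    obtain ⟨h2, h3⟩ := mem_induced.1 h1
    refine Finset.mem_erase.2 ⟨?_, mem_VS.2 h2⟩
    intro he
    have : u ∈ ({v}ᶜ : Finset (Fin n)) := h3 (Finset.mem_singleton_self u)
    rw [Finset.mem_compl, he] at this
    exact this (Finset.mem_singleton_self v)
  have h4 := Finset.card_le_card hsub
  have h5 : ((VS K).erase v).card + 1 = (VS K).card :=
    Finset.card_erase_add_one (mem_VS.2 hv)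
  omega

lemma VS_link_lt {K : Finset (Finset (Fin n))} {v : Fin n} (hv : {v} ∈ K) :
    (VS (link K {v})).card + 1 ≤ (VS K).card := by
  have hsub : VS (link K {v}) ⊆ (VS K).erase v := by
    intro u hu
    have h1 := mem_VS.1 hu
    obtain ⟨h2, h3, -⟩ := mem_link.1 h1
    refine Finset.mem_erase.2 ⟨?_, mem_VS.2 h2⟩
    intro he
    exact h3 (he ▸ Finset.mem_singleton_self u)
  have h4 := Finset.card_le_card hsub
  have h5 : ((VS K).erase v).card + 1 = (VS K).card :=
    Finset.card_erase_add_one (mem_VS.2 hv)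
  omega

/-- homology of a matroid complex vanishes away from the top dimension -/
theorem mat_vanish : ∀ N : ℕ, ∀ K : Finset (Finset (Fin n)), (VS K).card ≤ N →
    Mat K → ∀ p : ℤ, p ≠ (rk K Finset.univ : ℤ) - 1 → ¬ homNonzero k K p := by
  intro N
  induction N with
  | zero =>
    intro K hN hM p hp
    have hVS : VS K = ∅ := Finset.card_eq_zero.1 (Nat.le_zero.1 hN)
    have hrk := rk_univ_zero hM.1 hVS
    rcases lt_or_ge p (-1) with h | h
    · exact neg_vanish k h
    · apply high_vanish k
      intro F hF
      have hFe : F.card = 0 := by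
        have := card_le_rk hF (Finset.subset_univ F)
        rw [hrk] at this
        omega
      rw [hrk] at hp
      omega
  | succ N ih =>
    intro K hN hM p hp
    rcases lt_or_ge p (-1) with h | h
    · exact neg_vanish k h
    rcases le_or_gt ((rk K Finset.univ : ℤ) - 1) p with h2 | h2
    · -- p above the top dimension
      apply high_vanish k
      intro F hF
      have := card_le_rk hF (Finset.subset_univ F)
      have hne : p ≠ (rk K Finset.univ : ℤ) - 1 := hp
      omega
    -- now -1 ≤ p ≤ rk - 2, in particular rk ≥ 1
    have hrk1 : 1 ≤ rk K Finset.univ := by omega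
    obtain ⟨v, hvVS⟩ := exists_vertex_of_rk hM.1 hrk1
    have hv : {v} ∈ K := mem_VS.1 hvVS
    by_cases hco : rk K (Finset.univ.erase v) = rk K Finset.univ
    · -- v is not a coloop : Mayer-Vietoris
      rcases eq_or_lt_of_le h with hneg | hpos
      · rw [← hneg]
        exact vertex_vanish k hM.1 hv
      · have hp0 : 0 ≤ p := by omega
        set s := p.toNat with hs
        have hps : (s : ℤ) = p := Int.toNat_of_nonneg hp0
        rw [← hps]
        apply mv_step k hM.1 v s
        · -- link
          have hlkmat := mat_link hM hv
          have hlkcard : (VS (link K {v})).card ≤ N := by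
            have := VS_link_lt hv
            omega
          apply ih (link K {v}) hlkcard hlkmat
          have h6 := rk_link_univ hM hv
          omega
        · -- deletion
          have hdelmat := mat_induced hM ({v}ᶜ : Finset (Fin n))
          have hdelcard : (VS (induced K ({v}ᶜ : Finset (Fin n)))).card ≤ N := by
            have := VS_del_lt hv
            omega
          apply ih _ hdelcard hdelmat
          have h6 : rk (induced K ({v}ᶜ : Finset (Fin n))) Finset.univ
              = rk K (Finset.univ.erase v) := rk_del v Finset.univ
          omega
    · -- v is a coloop : cone
      exact cone_vanish k hM.1 (coloop_cone hM hco) p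

end VanishMain

section Euler

variable (k : Type) [Field k]

lemma suppOn_smul {K : Finset (Finset (Fin n))} {j : ℕ} (a : k)
    {x : Finset (Fin n) → k} (hx : suppOn k K j x) : suppOn k K j (a • x) := by
  intro F hF
  apply hx F
  intro h0
  exact hF (by show a * x F = 0; rw [h0, mul_zero])

/-- boundary as linear map -/
noncomputable def DopL : (Finset (Fin n) → k) →ₗ[k] (Finset (Fin n) → k) where
  toFun := Dop k
  map_add' := Dop_add k
  map_smul' := Dop_smul k

/-- chains supported on j-faces, as a submodule -/
noncomputable def SMod (K : Finset (Finset (Fin n))) (j : ℕ) :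
    Submodule k (Finset (Fin n) → k) where
  carrier := {x | suppOn k K j x}
  add_mem' := suppOn_add k
  zero_mem' := suppOn_zero k K j
  smul_mem' := suppOn_smul k

lemma mem_SMod {K : Finset (Finset (Fin n))} {j : ℕ} {x : Finset (Fin n) → k} :
    x ∈ SMod k K j ↔ suppOn k K j x := Iff.rfl

noncomputable def smodEquiv (K : Finset (Finset (Fin n))) (j : ℕ) :
    SMod k K j ≃ₗ[k] ({F : Finset (Fin n) // F ∈ K ∧ F.card = j} → k) where
  toFun x := fun F => x.1 F.1
  map_add' x y := rfl
  map_smul' a x := rfl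
  invFun c := ⟨ext k K j c, suppOn_ext k K j c⟩
  left_inv := by
    rintro ⟨x, hx⟩
    apply Subtype.ext
    funext F
    show ext k K j (fun F => x F.1) F = x F
    rw [ext]
    split_ifs with h
    · rfl
    · by_contra hne
      exact h (hx F fun h0 => hne h0.symm)
  right_inv := by
    intro c
    funext F
    show ext k K j c F.1 = c F
    rw [ext, dif_pos F.2]

lemma finrank_SMod (K : Finset (Finset (Fin n))) (j : ℕ) :
    Module.finrank k (SMod k K j) = fcount K j := by
  rw [LinearEquiv.finrank_eq (smodEquiv k K j), Module.finrank_pi,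
    Fintype.card_subtype]
  unfold fcount
  congr 1
  ext F
  simp [Finset.mem_filter]

lemma SMod_le_ker {K : Finset (Finset (Fin n))} :
    SMod k K 0 ≤ LinearMap.ker (DopL k) := by
  intro x hx
  rw [LinearMap.mem_ker]
  show Dop k x = 0
  funext G
  rw [Dop]
  apply Finset.sum_eq_zero
  intro w _
  by_cases hw : w ∈ G
  · rw [if_pos hw]
  · rw [if_neg hw]
    have : x (insert w G) = 0 := by
      by_contra h0
      have := (hx _ h0).2
      rw [Finset.card_insert_of_notMem hw] at this
      omega
    rw [this, mul_zero]

lemma SMod_top_eq_bot {K : Finset (Finset (Fin n))} {D : ℕ}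
    (hfaces : ∀ F ∈ K, F.card ≤ D) : SMod k K (D+1) = ⊥ := by
  rw [Submodule.eq_bot_iff]
  intro x hx
  funext F
  by_contra h0
  have h1 := hx F h0
  have := hfaces F h1.1
  omega

/-- if the (signed) Euler characteristic is positive, the top homology is nonzero -/
theorem euler_top {K : Finset (Finset (Fin n))} (hK : IsComplex K) (D : ℕ)
    (hfaces : ∀ F ∈ K, F.card ≤ D)
    (hexact : ∀ j : ℕ, j < D → ∀ x : Finset (Fin n) → k, suppOn k K j x →
      Dop k x = 0 → ∃ y, suppOn k K (j+1) y ∧ Dop k y = x)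
    (hpos : 0 < ∑ j ∈ Finset.range (D+1), (-1 : ℤ)^(D - j) * fcount K j) :
    homNonzero k K ((D : ℤ) - 1) := by
  -- cycles at level t
  set Z : ℕ → Submodule k (Finset (Fin n) → k) :=
    fun t => SMod k K t ⊓ LinearMap.ker (DopL k) with hZ
  have hrank : ∀ t : ℕ, t ≤ D → (Module.finrank k (Z t) : ℤ)
      = ∑ j ∈ Finset.range (t+1), (-1 : ℤ)^(t - j) * fcount K j := by
    intro t
    induction t with
    | zero =>
      intro _
      have hZ0 : Z 0 = SMod k K 0 := by
        rw [hZ]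
        exact inf_eq_left.2 (SMod_le_ker k)
      rw [hZ0, finrank_SMod]
      simp
    | succ t ih =>
      intro ht
      -- rank-nullity for the boundary restricted to level t+1
      set φ := (DopL k).domRestrict (SMod k K (t+1)) with hφ
      have hrn := LinearMap.finrank_range_add_finrank_ker φ
      have hrange : LinearMap.range φ = Submodule.map (DopL k) (SMod k K (t+1)) :=
        LinearMap.range_domRestrict _ _
      -- the image is exactly the cycles at level t
      have hBZ : Submodule.map (DopL k) (SMod k K (t+1)) = Z t := by
        apply le_antisymm
        · rintro x ⟨y, hy, rfl⟩
          rw [hZ]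
          refine Submodule.mem_inf.2 ⟨?_, ?_⟩
          · intro G hG
            obtain ⟨h1, h2⟩ := suppOn_Dop k hK hy G hG
            exact ⟨h1, by omega⟩
          · rw [LinearMap.mem_ker]
            show Dop k (Dop k y) = 0
            exact Dop_Dop k y
        · intro x hx
          rw [hZ] at hx
          obtain ⟨h1, h2⟩ := Submodule.mem_inf.1 hx
          obtain ⟨y, hy, hDy⟩ := hexact t (by omega) x h1 h2
          exact ⟨y, hy, hDy⟩
      -- kernel of the restriction is the cycles at level t+1
      have hker : Module.finrank k (LinearMap.ker φ) = Module.finrank k (Z (t+1)) := by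
        rw [hφ, LinearMap.ker_domRestrict]
        have hc : Submodule.comap (SMod k K (t+1)).subtype (LinearMap.ker (DopL k))
            = Submodule.comap (SMod k K (t+1)).subtype (Z (t+1)) := by
          rw [hZ]
          rw [Submodule.comap_inf, Submodule.comap_subtype_self]
          simp
        rw [hc]
        exact LinearEquiv.finrank_eq (Submodule.comapSubtypeEquivOfLe (by
          rw [hZ]; exact inf_le_left))
      rw [hrange, hBZ, hker, finrank_SMod] at hrn
      -- arithmetic
      have hih := ih (by omega)
      have hsum : ∑ j ∈ Finset.range (t+2), (-1 : ℤ)^(t+1 - j) * fcount K j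
          = fcount K (t+1) - ∑ j ∈ Finset.range (t+1), (-1 : ℤ)^(t - j) * fcount K j := by
        rw [Finset.sum_range_succ]
        have hc : ∀ j ∈ Finset.range (t+1),
            (-1 : ℤ)^(t+1 - j) * fcount K j = -((-1 : ℤ)^(t - j) * fcount K j) := by
          intro j hj
          have hjt : j ≤ t := by
            have := Finset.mem_range.1 hj
            omega
          have : t + 1 - j = (t - j) + 1 := by omega
          rw [this, pow_succ]
          ring
        rw [Finset.sum_congr rfl hc, Finset.sum_neg_distrib]
        simp
        ring
      rw [hsum, ← hih]
      omega
  -- the top cycles are nontrivial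
  have hD := hrank D le_rfl
  have hpos' : 0 < Module.finrank k (Z D) := by omega
  have hne : Z D ≠ ⊥ := by
    intro h
    rw [h, finrank_bot] at hpos'
    omega
  obtain ⟨x, hxZ, hx0⟩ := (Submodule.ne_bot_iff _).1 hne
  obtain ⟨hxS, hxk⟩ := Submodule.mem_inf.1 hxZ
  rw [homNonzero_iff']
  refine ⟨D, by ring, x, hxS, hxk, ?_⟩
  intro y hy hDy
  have hy0 : y = 0 := by
    have : y ∈ SMod k K (D+1) := hy
    rw [SMod_top_eq_bot k hfaces] at this
    exact this
  rw [hy0, Dop_zero] at hDy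
  exact hx0 hDy.symm

/-- the alternating sum of face numbers as a sum over faces -/
lemma sum_fcount_eq {K : Finset (Finset (Fin n))} {D : ℕ}
    (hfaces : ∀ F ∈ K, F.card ≤ D) :
    ∑ j ∈ Finset.range (D+1), (-1 : ℤ)^(D - j) * fcount K j
      = (-1 : ℤ)^D * ∑ F ∈ K, (-1 : ℤ)^F.card := by
  have hmaps : ∀ F ∈ K, F.card ∈ Finset.range (D+1) := by
    intro F hF
    rw [Finset.mem_range]
    have := hfaces F hF
    omega
  have h1 := Finset.sum_fiberwise_of_maps_to hmaps (fun F => (-1 : ℤ)^(D - F.card))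
  have h2 : ∀ j ∈ Finset.range (D+1),
      ∑ F ∈ K.filter (fun F => F.card = j), (-1 : ℤ)^(D - F.card)
        = (-1 : ℤ)^(D - j) * fcount K j := by
    intro j hj
    rw [Finset.sum_congr rfl (fun F hF => by
      rw [(Finset.mem_filter.1 hF).2]), Finset.sum_const]
    rw [fcount]
    ring
  rw [← Finset.sum_congr rfl h2, h1]
  rw [Finset.mul_sum]
  refine Finset.sum_congr rfl fun F hF => ?_
  have hle := hfaces F hF
  have hsub : D - F.card + F.card = D := by omega
  have : (-1 : ℤ)^(D - F.card) * (-1 : ℤ)^F.card = (-1 : ℤ)^D := by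
    rw [← pow_add, hsub]
  calc (-1 : ℤ)^(D - F.card)
      = (-1 : ℤ)^(D - F.card) * ((-1 : ℤ)^F.card * (-1 : ℤ)^F.card) := by
        rw [← pow_add, ← two_mul, pow_mul]
        norm_num
    _ = (-1 : ℤ)^D * (-1 : ℤ)^F.card := by rw [← mul_assoc, this]

end Euler

section Positivity

lemma del_eq_filter (K : Finset (Finset (Fin n))) (v : Fin n) :
    induced K ({v}ᶜ : Finset (Fin n)) = K.filter (fun F => v ∉ F) := by
  unfold induced
  apply Finset.filter_congr
  intro F _
  constructor
  · intro h hv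
    have := h hv
    rw [Finset.mem_compl] at this
    exact this (Finset.mem_singleton_self v)
  · intro h u hu
    rw [Finset.mem_compl, Finset.mem_singleton]
    intro he
    exact h (he ▸ hu)

lemma t_split {K : Finset (Finset (Fin n))} (hK : IsComplex K) (v : Fin n) :
    ∑ F ∈ K, (-1 : ℤ)^F.card
      = ∑ F ∈ induced K ({v}ᶜ : Finset (Fin n)), (-1 : ℤ)^F.card
        - ∑ G ∈ link K {v}, (-1 : ℤ)^G.card := by
  have h1 := Finset.sum_filter_add_sum_filter_not K (fun F => v ∈ F)
    (fun F => (-1 : ℤ)^F.card)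
  have h2 : K.filter (fun F => ¬ v ∈ F) = induced K ({v}ᶜ : Finset (Fin n)) :=
    (del_eq_filter K v).symm
  have h3 : ∑ F ∈ K.filter (fun F => v ∈ F), (-1 : ℤ)^F.card
      = ∑ G ∈ link K {v}, -(-1 : ℤ)^G.card := by
    apply Finset.sum_nbij' (fun F => F.erase v) (fun G => insert v G)
    · intro F hF
      obtain ⟨hFK, hvF⟩ := Finset.mem_filter.1 hF
      exact mem_link.2 ⟨hK.2 F hFK _ (Finset.erase_subset v F),
        Finset.notMem_erase v F, by rw [Finset.insert_erase hvF]; exact hFK⟩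
    · intro G hG
      obtain ⟨hGK, hvG, hiG⟩ := mem_link.1 hG
      exact Finset.mem_filter.2 ⟨hiG, Finset.mem_insert_self v G⟩
    · intro F hF
      exact Finset.insert_erase (Finset.mem_filter.1 hF).2
    · intro G hG
      exact Finset.erase_insert (mem_link.1 hG).2.1
    · intro F hF
      obtain ⟨hFK, hvF⟩ := Finset.mem_filter.1 hF
      have : F.card = (F.erase v).card + 1 := by
        rw [Finset.card_erase_of_mem hvF]
        have : 1 ≤ F.card := Finset.card_pos.2 ⟨v, hvF⟩
        omega
      rw [this, pow_succ]
      ring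
  rw [h3, Finset.sum_neg_distrib] at h1
  rw [h2] at h1
  omega

lemma cone_link_eq_del {K : Finset (Finset (Fin n))} (hK : IsComplex K) {v : Fin n}
    (hcone : ∀ F ∈ K, insert v F ∈ K) :
    link K {v} = induced K ({v}ᶜ : Finset (Fin n)) := by
  rw [del_eq_filter]
  ext G
  rw [mem_link, Finset.mem_filter]
  constructor
  · rintro ⟨h1, h2, -⟩
    exact ⟨h1, h2⟩
  · rintro ⟨h1, h2⟩
    exact ⟨h1, h2, hcone G h1⟩

lemma K_eq_empty_of_no_vertex {K : Finset (Finset (Fin n))} (hK : IsComplex K)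
    (h : VS K = ∅) : K = {∅} := by
  ext F
  rw [Finset.mem_singleton]
  constructor
  · intro hF
    rw [← Finset.card_eq_zero]
    by_contra hne
    obtain ⟨u, hu⟩ := Finset.card_pos.1 (Nat.pos_of_ne_zero hne)
    have : u ∈ VS K := mem_VS.2 (vertex_of_face hK hF hu)
    rw [h] at this
    exact Finset.notMem_empty u this
  · intro hF
    rw [hF]
    exact hK.1

/-- positivity of the signed Euler characteristic for coloop-free matroids -/
theorem t_pos : ∀ N : ℕ, ∀ K : Finset (Finset (Fin n)), (VS K).card ≤ N → Mat K →
    0 ≤ (-1 : ℤ)^(rk K Finset.univ) * ∑ F ∈ K, (-1 : ℤ)^F.card ∧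
    ((∀ v : Fin n, {v} ∈ K → rk K (Finset.univ.erase v) = rk K Finset.univ) →
      0 < (-1 : ℤ)^(rk K Finset.univ) * ∑ F ∈ K, (-1 : ℤ)^F.card) := by
  intro N
  induction N with
  | zero =>
    intro K hN hM
    have hVS : VS K = ∅ := Finset.card_eq_zero.1 (Nat.le_zero.1 hN)
    have hK1 : K = {∅} := K_eq_empty_of_no_vertex hM.1 hVS
    have hrk := rk_univ_zero hM.1 hVS
    rw [hK1] at hrk ⊢
    rw [hrk]
    simp
  | succ N ih =>
    intro K hN hM
    by_cases hVSe : VS K = ∅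
    · have hK1 : K = {∅} := K_eq_empty_of_no_vertex hM.1 hVSe
      have hrk := rk_univ_zero hM.1 hVSe
      rw [hK1] at hrk ⊢
      rw [hrk]
      simp
    obtain ⟨v, hvVS⟩ := Finset.nonempty_iff_ne_empty.2 hVSe
    have hv : {v} ∈ K := mem_VS.1 hvVS
    have hD1 : 1 ≤ rk K Finset.univ := by
      have := card_le_rk hv (Finset.subset_univ _)
      simpa using this
    have hts := t_split hM.1 v
    by_cases hco : rk K (Finset.univ.erase v) = rk K Finset.univ
    · -- v is not a coloop
      set D := rk K Finset.univ with hDdef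
      have hdelmat := mat_induced hM ({v}ᶜ : Finset (Fin n))
      have hdelcard : (VS (induced K ({v}ᶜ : Finset (Fin n)))).card ≤ N := by
        have := VS_del_lt hv; omega
      have hdelrk : rk (induced K ({v}ᶜ : Finset (Fin n))) Finset.univ = D := by
        rw [rk_del]; exact hco
      have hlkmat := mat_link hM hv
      have hlkcard : (VS (link K {v})).card ≤ N := by
        have := VS_link_lt hv; omega
      have hlkrk : rk (link K {v}) Finset.univ + 1 = D := rk_link_univ hM hv
      obtain ⟨hdel0, -⟩ := ih _ hdelcard hdelmat
      obtain ⟨hlk0, hlkpos⟩ := ih _ hlkcard hlkmat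
      rw [hdelrk] at hdel0
      have hDm : (-1 : ℤ)^D = -(-1 : ℤ)^(D - 1) := by
        have : D = (D - 1) + 1 := by omega
        rw [this, pow_succ]
        have h9 : D - 1 + 1 - 1 = D - 1 := by omega
        rw [h9]
        ring
      have hlkD : rk (link K {v}) Finset.univ = D - 1 := by omega
      rw [hlkD] at hlk0
      constructor
      · rw [hts]
        have : (-1:ℤ)^D * (∑ F ∈ induced K ({v}ᶜ : Finset (Fin n)), (-1:ℤ)^F.card
            - ∑ G ∈ link K {v}, (-1:ℤ)^G.card)
            = (-1:ℤ)^D * ∑ F ∈ induced K ({v}ᶜ : Finset (Fin n)), (-1:ℤ)^F.card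
              + (-1:ℤ)^(D-1) * ∑ G ∈ link K {v}, (-1:ℤ)^G.card := by
          rw [hDm]; ring
        rw [this]
        omega
      · intro hfree
        have hlkfree : ∀ w : Fin n, {w} ∈ link K {v} →
            rk (link K {v}) (Finset.univ.erase w) = rk (link K {v}) Finset.univ := by
          intro w hw
          obtain ⟨hwK, hvw, hiw⟩ := mem_link.1 hw
          have hvne : v ≠ w := by
            intro he
            exact hvw (he ▸ Finset.mem_singleton_self v)
          refine le_antisymm (rk_mono _ (Finset.erase_subset w Finset.univ)) ?_
          have hge := rk_link_erase_ge hM hv hvne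
            (Finset.mem_erase.2 ⟨hvne, Finset.mem_univ v⟩)
            (Finset.notMem_erase w Finset.univ)
            (hfree w hwK)
          omega
        have hpos := hlkpos hlkfree
        rw [hlkD] at hpos
        rw [hts]
        have : (-1:ℤ)^D * (∑ F ∈ induced K ({v}ᶜ : Finset (Fin n)), (-1:ℤ)^F.card
            - ∑ G ∈ link K {v}, (-1:ℤ)^G.card)
            = (-1:ℤ)^D * ∑ F ∈ induced K ({v}ᶜ : Finset (Fin n)), (-1:ℤ)^F.card
              + (-1:ℤ)^(D-1) * ∑ G ∈ link K {v}, (-1:ℤ)^G.card := by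
          rw [hDm]; ring
        rw [this]
        omega
    · -- v is a coloop : the complex is a cone and t = 0
      have hcone := coloop_cone hM hco
      have ht0 : ∑ F ∈ K, (-1 : ℤ)^F.card = 0 := by
        rw [hts, cone_link_eq_del hM.1 hcone]
        ring
      rw [ht0, mul_zero]
      exact ⟨le_rfl, fun hfree => absurd (hfree v hv) hco⟩

end Positivity

section Characterization

variable (k : Type) [Field k]

/-- full characterization of nonvanishing homology of a matroid complex -/
theorem hom_char {K : Finset (Finset (Fin n))} (hM : Mat K) (p : ℤ) :
    homNonzero k K p ↔ (p = (rk K Finset.univ : ℤ) - 1 ∧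
      ∀ v : Fin n, {v} ∈ K → rk K (Finset.univ.erase v) = rk K Finset.univ) := by
  constructor
  · intro h
    constructor
    · by_contra hne
      exact mat_vanish k (VS K).card K le_rfl hM p hne h
    · intro v hv
      by_contra hco
      exact cone_vanish k hM.1 (coloop_cone hM hco) p h
  · rintro ⟨hp, hfree⟩
    subst hp
    apply euler_top k hM.1 (rk K Finset.univ)
    · intro F hF
      exact card_le_rk hF (Finset.subset_univ F)
    · intro j hj x hx hcyc
      apply not_hom_boundary k _ hx hcyc
      apply mat_vanish k (VS K).card K le_rfl hM
      intro he
      have : (j : ℤ) = (rk K Finset.univ : ℤ) := by omega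
      have : j = rk K Finset.univ := by exact_mod_cast this
      omega
    · rw [sum_fcount_eq (fun F hF => card_le_rk hF (Finset.subset_univ F))]
      exact (t_pos (VS K).card K le_rfl hM).2 hfree

end Characterization

section Counting

/-- the complement of the image of a partial removal sequence -/
noncomputable def Sf {j : ℕ} (f : Fin j → Fin n) : Finset (Fin n) :=
  Finset.univ \ Finset.image f Finset.univ

/-- removal sequences: injective sequences whose complements stay spanning -/
noncomputable def Rem (K : Finset (Finset (Fin n))) (j : ℕ) : Finset (Fin j → Fin n) :=
  Finset.univ.filter fun f => Function.Injective f ∧ rk K (Sf f) = rk K Finset.univ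

lemma mem_Rem {K : Finset (Finset (Fin n))} {j : ℕ} {f : Fin j → Fin n} :
    f ∈ Rem K j ↔ Function.Injective f ∧ rk K (Sf f) = rk K Finset.univ := by
  unfold Rem
  rw [Finset.mem_filter]
  exact ⟨fun h => h.2, fun h => ⟨Finset.mem_univ f, h⟩⟩

lemma card_Rem_zero (K : Finset (Finset (Fin n))) : (Rem K 0).card = 1 := by
  have h1 : Rem K 0 = Finset.univ := by
    apply Finset.eq_univ_of_forall
    intro f
    refine mem_Rem.2 ⟨fun a => a.elim0, ?_⟩
    have h2 : Sf f = Finset.univ := by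
      unfold Sf
      have : (Finset.univ : Finset (Fin 0)) = ∅ := Finset.univ_eq_empty
      rw [this, Finset.image_empty, Finset.sdiff_empty]
    rw [h2]
  rw [h1, Finset.card_univ]
  simp

lemma image_snoc {j : ℕ} (f : Fin j → Fin n) (w : Fin n) :
    Finset.image (Fin.snoc f w : Fin (j+1) → Fin n) Finset.univ
      = insert w (Finset.image f Finset.univ) := by
  ext u
  simp only [Finset.mem_image, Finset.mem_insert]
  constructor
  · rintro ⟨i, -, rfl⟩
    induction i using Fin.lastCases with
    | last => left; rw [Fin.snoc_last]
    | cast i => right; exact ⟨i, Finset.mem_univ i, by rw [Fin.snoc_castSucc]⟩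
  · rintro (rfl | ⟨i, -, rfl⟩)
    · exact ⟨Fin.last j, Finset.mem_univ _, Fin.snoc_last _ _⟩
    · exact ⟨Fin.castSucc i, Finset.mem_univ _, Fin.snoc_castSucc _ _ _⟩

lemma image_eq_insert_comp_castSucc {j : ℕ} (f : Fin (j+1) → Fin n) :
    Finset.image f Finset.univ
      = insert (f (Fin.last j)) (Finset.image (f ∘ Fin.castSucc) Finset.univ) := by
  have h : f = Fin.snoc (f ∘ Fin.castSucc) (f (Fin.last j)) := by
    funext i
    exact (Fin.snoc_init_self f).symm ▸ rfl
  conv_lhs => rw [h]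
  rw [image_snoc]

lemma snoc_injective {j : ℕ} {f : Fin j → Fin n} (hf : Function.Injective f)
    {w : Fin n} (hw : w ∉ Finset.image f Finset.univ) :
    Function.Injective (Fin.snoc f w : Fin (j+1) → Fin n) := by
  intro a b hab
  induction a using Fin.lastCases with
  | last =>
    induction b using Fin.lastCases with
    | last => rfl
    | cast b =>
      rw [Fin.snoc_last, Fin.snoc_castSucc] at hab
      exact absurd (Finset.mem_image_of_mem f (Finset.mem_univ b)) (hab ▸ hw)
  | cast a =>
    induction b using Fin.lastCases with
    | last =>
      rw [Fin.snoc_last, Fin.snoc_castSucc] at hab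
      exact absurd (Finset.mem_image_of_mem f (Finset.mem_univ a)) (hab.symm ▸ hw)
    | cast b =>
      rw [Fin.snoc_castSucc, Fin.snoc_castSucc] at hab
      rw [hf hab]

lemma Sf_snoc {j : ℕ} (f : Fin j → Fin n) (w : Fin n) :
    Sf (Fin.snoc f w : Fin (j+1) → Fin n) = (Sf f).erase w := by
  unfold Sf
  rw [image_snoc]
  ext u
  simp only [Finset.mem_sdiff, Finset.mem_erase, Finset.mem_insert, Finset.mem_univ,
    true_and]
  tauto

lemma snoc_mem_Rem {K : Finset (Finset (Fin n))} {j : ℕ} {f : Fin j → Fin n}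
    (hf : f ∈ Rem K j) {w : Fin n} (hw : w ∈ cycSet K (Sf f)) :
    (Fin.snoc f w : Fin (j+1) → Fin n) ∈ Rem K (j+1) := by
  obtain ⟨hinj, hrk⟩ := mem_Rem.1 hf
  obtain ⟨hwS, hwrk⟩ := mem_cycSet.1 hw
  have hwim : w ∉ Finset.image f Finset.univ := by
    unfold Sf at hwS
    exact (Finset.mem_sdiff.1 hwS).2
  refine mem_Rem.2 ⟨snoc_injective hinj hwim, ?_⟩
  rw [Sf_snoc, hwrk, hrk]

lemma card_Rem_succ (K : Finset (Finset (Fin n))) (j : ℕ) :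
    (Rem K (j+1)).card = ∑ f ∈ Rem K j, (cycSet K (Sf f)).card := by
  have hmaps : ∀ g ∈ Rem K (j+1), (g ∘ Fin.castSucc : Fin j → Fin n) ∈ Rem K j := by
    intro g hg
    obtain ⟨hinj, hrk⟩ := mem_Rem.1 hg
    refine mem_Rem.2 ⟨hinj.comp (Fin.castSucc_injective j), ?_⟩
    have hsub : Sf g ⊆ Sf (g ∘ Fin.castSucc : Fin j → Fin n) := by
      apply Finset.sdiff_subset_sdiff (Finset.Subset.refl _)
      rw [image_eq_insert_comp_castSucc g]
      exact Finset.subset_insert _ _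
    have h1 := rk_mono K hsub
    have h2 := rk_mono K (Finset.subset_univ (Sf (g ∘ Fin.castSucc : Fin j → Fin n)))
    omega
  rw [Finset.card_eq_sum_card_fiberwise hmaps]
  refine Finset.sum_congr rfl fun f hf => ?_
  apply Finset.card_nbij' (fun g => g (Fin.last j)) (fun w => (Fin.snoc f w : Fin (j+1) → Fin n))
  · intro g hg
    obtain ⟨hgR, hgf⟩ := Finset.mem_filter.1 hg
    obtain ⟨hinj, hrk⟩ := mem_Rem.1 hgR
    obtain ⟨hfinj, hfrk⟩ := mem_Rem.1 hf
    have him : Finset.image f Finset.univ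
        = Finset.image (g ∘ Fin.castSucc) Finset.univ := by rw [hgf]
    have hwim : g (Fin.last j) ∉ Finset.image f Finset.univ := by
      rw [him]
      intro hc
      obtain ⟨i, -, hi⟩ := Finset.mem_image.1 hc
      have : Fin.castSucc i = Fin.last j := hinj hi
      exact absurd this (Fin.castSucc_lt_last i).ne
    have hSf : Sf g = (Sf f).erase (g (Fin.last j)) := by
      unfold Sf
      rw [image_eq_insert_comp_castSucc g, ← hgf]
      ext u
      simp only [Finset.mem_sdiff, Finset.mem_erase, Finset.mem_insert,
        Finset.mem_univ, true_and]
      tauto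
    refine mem_cycSet.2 ⟨?_, ?_⟩
    · unfold Sf
      rw [Finset.mem_sdiff]
      exact ⟨Finset.mem_univ _, hwim⟩
    · rw [← hSf, hrk, hfrk]
  · intro w hw
    refine Finset.mem_filter.2 ⟨snoc_mem_Rem hf hw, ?_⟩
    funext i
    exact Fin.snoc_castSucc (α := fun _ => Fin n) (p := f) (x := w) (i := i)
  · intro g hg
    have hgf : (g ∘ Fin.castSucc : Fin j → Fin n) = f := (Finset.mem_filter.1 hg).2
    rw [← hgf]
    exact Fin.snoc_init_self g
  · intro w hw
    exact Fin.snoc_last _ _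

lemma Rem_nonempty {K : Finset (Finset (Fin n))} (hM : Mat K) {d c : ℕ}
    (hd : rk K Finset.univ = d) (hn : d + c = n) :
    ∀ j : ℕ, j ≤ c → (Rem K j).Nonempty := by
  intro j
  induction j with
  | zero =>
    intro _
    rw [← Finset.card_pos, card_Rem_zero]
    omega
  | succ j ih =>
    intro hj
    obtain ⟨f, hf⟩ := ih (by omega)
    obtain ⟨hinj, hrk⟩ := mem_Rem.1 hf
    have hcard : (Sf f).card = n - j := by
      unfold Sf
      rw [Finset.card_sdiff_of_subset (Finset.subset_univ _),
        Finset.card_image_of_injective _ hinj]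
      simp
    have hlt : rk K (Sf f) < (Sf f).card := by
      rw [hrk, hd, hcard]
      omega
    obtain ⟨v, hvS, hvrk⟩ := exists_noncoloop hM.1 hlt
    exact ⟨_, snoc_mem_Rem hf (mem_cycSet.2 ⟨hvS, hvrk⟩)⟩

end Counting

section TopCount

lemma card_image_filter_eq_factorial (c : ℕ) (T : Finset (Fin n)) (hT : T.card = c) :
    ((Finset.univ : Finset (Fin c → Fin n)).filter
      (fun f => Function.Injective f ∧ Finset.image f Finset.univ = T)).card
      = c.factorial := by
  rw [← Fintype.card_subtype]
  have hcardT : Fintype.card {x // x ∈ T} = Fintype.card (Fin c) := by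
    rw [Fintype.card_coe, hT, Fintype.card_fin]
  have e : {f : Fin c → Fin n // Function.Injective f ∧ Finset.image f Finset.univ = T}
      ≃ (Fin c ≃ {x // x ∈ T}) := by
    refine ⟨fun f => Equiv.ofBijective
      (fun i => (⟨f.1 i, by
        have hm := Finset.mem_image_of_mem f.1 (Finset.mem_univ i)
        rw [f.2.2] at hm
        exact hm⟩ :
        {x // x ∈ T})) ?_, fun e => ⟨fun i => (e i : Fin n), ?_, ?_⟩, ?_, ?_⟩
    · rw [Fintype.bijective_iff_injective_and_card]
      exact ⟨fun a b hab => f.2.1 (congrArg Subtype.val hab), hcardT.symm⟩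
    · intro a b hab
      exact e.injective (Subtype.ext hab)
    · ext t
      simp only [Finset.mem_image, Finset.mem_univ, true_and]
      constructor
      · rintro ⟨i, rfl⟩
        exact (e i).2
      · intro ht
        exact ⟨e.symm ⟨t, ht⟩, by rw [Equiv.apply_symm_apply]⟩
    · intro f
      apply Subtype.ext
      funext i
      rfl
    · intro e
      apply Equiv.ext
      intro i
      apply Subtype.ext
      rfl
  rw [Fintype.card_congr e,
    Fintype.card_equiv (Fintype.equivOfCardEq hcardT.symm), Fintype.card_fin]

lemma card_Rem_top {K : Finset (Finset (Fin n))} (hM : Mat K) {d c : ℕ}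
    (hd : rk K Finset.univ = d) (hn : d + c = n) :
    (Rem K c).card = c.factorial * fcount K d := by
  have hmaps : ∀ f ∈ Rem K c, Sf f ∈ K.filter (fun F => F.card = d) := by
    intro f hf
    obtain ⟨hinj, hrk⟩ := mem_Rem.1 hf
    have hcard : (Sf f).card = d := by
      unfold Sf
      rw [Finset.card_sdiff_of_subset (Finset.subset_univ _),
        Finset.card_image_of_injective _ hinj]
      simp only [Finset.card_univ, Fintype.card_fin]
      omega
    obtain ⟨B, hBK, hBS, hBc⟩ := exists_basis hM.1 (Sf f)
    have hBeq : B = Sf f := by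
      apply Finset.eq_of_subset_of_card_le hBS
      rw [hBc, hrk, hd, hcard]
    exact Finset.mem_filter.2 ⟨hBeq ▸ hBK, hcard⟩
  rw [Finset.card_eq_sum_card_fiberwise hmaps]
  have hfiber : ∀ B ∈ K.filter (fun F => F.card = d),
      ((Rem K c).filter (fun f => Sf f = B)).card = c.factorial := by
    intro B hB
    obtain ⟨hBK, hBd⟩ := Finset.mem_filter.1 hB
    have hTcard : (Finset.univ \ B).card = c := by
      rw [Finset.card_sdiff_of_subset (Finset.subset_univ B), hBd]
      simp only [Finset.card_univ, Fintype.card_fin]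
      omega
    rw [← card_image_filter_eq_factorial c (Finset.univ \ B) hTcard]
    congr 1
    ext f
    rw [Finset.mem_filter, Finset.mem_filter, mem_Rem]
    constructor
    · rintro ⟨⟨hinj, hrk⟩, hSf⟩
      refine ⟨Finset.mem_univ f, hinj, ?_⟩
      have h1 : Finset.image f Finset.univ = Finset.univ \ Sf f := by
        unfold Sf
        rw [Finset.sdiff_sdiff_self_left,
          Finset.inter_eq_right.2 (Finset.subset_univ _)]
      rw [h1, hSf]
    · rintro ⟨-, hinj, him⟩
      have hSf : Sf f = B := by
        unfold Sf
        rw [him, Finset.sdiff_sdiff_self_left,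
          Finset.inter_eq_right.2 (Finset.subset_univ B)]
      refine ⟨⟨hinj, ?_⟩, hSf⟩
      rw [hSf]
      have h2 := card_le_rk hBK (Finset.Subset.refl B)
      have h3 := rk_le_card K B
      have h4 := rk_mono K (Finset.subset_univ B)
      omega
  rw [Finset.sum_congr rfl hfiber, Finset.sum_const, fcount, smul_eq_mul, Nat.mul_comm]

end TopCount

section Assembly

variable (k : Type) [Field k]

lemma induced_univ (K : Finset (Finset (Fin n))) : induced K Finset.univ = K :=
  Finset.filter_true_of_mem (fun F _ => Finset.subset_univ F)

/-- characterization of the Hochster sets -/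
lemma mem_setS_iff {K : Finset (Finset (Fin n))} (hM : Mat K)
    (hv : ∀ v : Fin n, {v} ∈ K) (i : ℕ) (m : ℕ) :
    (∃ W : Finset (Fin n), W.card = m ∧
        homNonzero k (induced K W) ((W.card : ℤ) - i - 1))
      ↔ ∃ W : Finset (Fin n), W.card = m ∧ W.card = rk K W + i ∧ CFree K W := by
  have key : ∀ W : Finset (Fin n),
      homNonzero k (induced K W) ((W.card : ℤ) - i - 1)
        ↔ (W.card = rk K W + i ∧ CFree K W) := by
    intro W
    rw [hom_char k (mat_induced hM W)]
    have h1 : rk (induced K W) Finset.univ = rk K W := by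
      rw [rk_induced, Finset.inter_univ]
    have h2 : ∀ w : Fin n, rk (induced K W) (Finset.univ.erase w) = rk K (W.erase w) := by
      intro w
      rw [rk_induced]
      congr 1
      ext u
      simp only [Finset.mem_inter, Finset.mem_erase, Finset.mem_univ, and_true]
      tauto
    have h3 : ∀ w : Fin n, ({w} ∈ induced K W ↔ w ∈ W) := by
      intro w
      rw [mem_induced]
      constructor
      · rintro ⟨-, hsub⟩
        exact hsub (Finset.mem_singleton_self w)
      · intro hw
        exact ⟨hv w, Finset.singleton_subset_iff.2 hw⟩
    constructor
    · rintro ⟨hdeg, hfree⟩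
      rw [h1] at hdeg
      have hrkle := rk_le_card K W
      constructor
      · omega
      · intro w hw
        have := hfree w ((h3 w).2 hw)
        rw [h1, h2] at this
        exact this
    · rintro ⟨hdeg, hfree⟩
      constructor
      · rw [h1]; omega
      · intro w hw
        rw [h1, h2]
        exact hfree w ((h3 w).1 hw)
  constructor
  · rintro ⟨W, hWm, hhom⟩
    exact ⟨W, hWm, (key W).1 hhom⟩
  · rintro ⟨W, hWm, h1, h2⟩
    exact ⟨W, hWm, (key W).2 ⟨h1, h2⟩⟩

lemma card_Sf {j : ℕ} {f : Fin j → Fin n} (hf : Function.Injective f) :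
    (Sf f).card = n - j := by
  unfold Sf
  rw [Finset.card_sdiff_of_subset (Finset.subset_univ _),
    Finset.card_image_of_injective _ hf]
  simp

/-- the noncoloop set of a node at depth j witnesses the set S_{c-j} -/
lemma cyc_witness {K : Finset (Finset (Fin n))} (hM : Mat K) {d c : ℕ}
    (hrk : rk K Finset.univ = d) (hn : d + c = n) {j : ℕ} (hj : j ≤ c)
    {f : Fin j → Fin n} (hf : f ∈ Rem K j) :
    (cycSet K (Sf f)).card = rk K (cycSet K (Sf f)) + (c - j) ∧
      CFree K (cycSet K (Sf f)) := by
  obtain ⟨hinj, hrkf⟩ := mem_Rem.1 hf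
  have hcard : (Sf f).card = n - j := card_Sf hinj
  have hnull := null_cycSet hM (Sf f).card (Sf f) le_rfl
  have hcycle := Finset.card_le_card (cycSet_subset K (Sf f))
  have hrkc := rk_le_card K (cycSet K (Sf f))
  refine ⟨?_, cycSet_cfree hM (Sf f)⟩
  rw [hrkf, hrk] at hnull
  omega

/-- basic properties of the Hochster sets -/
lemma setS_bddAbove (K : Finset (Finset (Fin n))) (i : ℕ) :
    BddAbove {m : ℕ | ∃ W : Finset (Fin n), W.card = m ∧
      homNonzero k (induced K W) ((W.card : ℤ) - i - 1)} := by
  refine ⟨n, ?_⟩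
  rintro m ⟨W, hWm, -⟩
  rw [← hWm]
  have := Finset.card_le_univ W
  simpa using this

lemma setS_nonempty {K : Finset (Finset (Fin n))} (hM : Mat K)
    (hv : ∀ v : Fin n, {v} ∈ K) {d c : ℕ}
    (hrk : rk K Finset.univ = d) (hn : d + c = n) {i : ℕ} (hi1 : 1 ≤ i) (hic : i ≤ c) :
    {m : ℕ | ∃ W : Finset (Fin n), W.card = m ∧
      homNonzero k (induced K W) ((W.card : ℤ) - i - 1)}.Nonempty := by
  obtain ⟨f, hf⟩ := Rem_nonempty hM hrk hn (c - i) (by omega)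
  obtain ⟨hnul, hfree⟩ := cyc_witness hM hrk hn (by omega) hf
  have hcc : c - (c - i) = i := by omega
  rw [hcc] at hnul
  exact ⟨(cycSet K (Sf f)).card, (mem_setS_iff k hM hv i _).2
    ⟨cycSet K (Sf f), rfl, hnul, hfree⟩⟩

lemma mshift_pos {K : Finset (Finset (Fin n))} (hM : Mat K)
    (hv : ∀ v : Fin n, {v} ∈ K) {d c : ℕ}
    (hrk : rk K Finset.univ = d) (hn : d + c = n) {i : ℕ} (hi1 : 1 ≤ i) (hic : i ≤ c) :
    1 ≤ mshift k K i := by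
  have hmem := Nat.sInf_mem (setS_nonempty k hM hv hrk hn hi1 hic)
  obtain ⟨W, hWm, hhom⟩ := hmem
  obtain ⟨W', hW'm, hnul, -⟩ := (mem_setS_iff k hM hv i _).1 ⟨W, hWm, hhom⟩
  unfold mshift
  omega

lemma mshift_le_Mshift {K : Finset (Finset (Fin n))} (hM : Mat K)
    (hv : ∀ v : Fin n, {v} ∈ K) {d c : ℕ}
    (hrk : rk K Finset.univ = d) (hn : d + c = n) {i : ℕ} (hi1 : 1 ≤ i) (hic : i ≤ c) :
    mshift k K i ≤ Mshift k K i :=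
  Nat.sInf_le (Nat.sSup_mem (setS_nonempty k hM hv hrk hn hi1 hic) (setS_bddAbove k K i))

/-- bounds for the branching numbers -/
lemma cyc_bounds {K : Finset (Finset (Fin n))} (hM : Mat K)
    (hv : ∀ v : Fin n, {v} ∈ K) {d c : ℕ}
    (hrk : rk K Finset.univ = d) (hn : d + c = n) {j : ℕ} (hj : j < c)
    {f : Fin j → Fin n} (hf : f ∈ Rem K j) :
    mshift k K (c - j) ≤ (cycSet K (Sf f)).card ∧
      (cycSet K (Sf f)).card ≤ Mshift k K (c - j) := by
  obtain ⟨hnul, hfree⟩ := cyc_witness hM hrk hn (le_of_lt hj) hf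
  have hmem : (cycSet K (Sf f)).card ∈ {m : ℕ | ∃ W : Finset (Fin n), W.card = m ∧
      homNonzero k (induced K W) ((W.card : ℤ) - ((c - j : ℕ) : ℤ) - 1)} :=
    (mem_setS_iff k hM hv (c - j) _).2 ⟨cycSet K (Sf f), rfl, hnul, hfree⟩
  exact ⟨Nat.sInf_le hmem, le_csSup (setS_bddAbove k K (c - j)) hmem⟩

end Assembly

section Chains

variable (k : Type) [Field k]

lemma prod_Ioc_split (g : ℕ → ℕ) {i c : ℕ} (hi1 : 1 ≤ i) (hic : i ≤ c) :
    (∏ t ∈ Finset.Ioc 0 c, g t)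
      = ((∏ t ∈ Finset.Ioc 0 (i-1), g t) * g i) * (∏ t ∈ Finset.Ioc i c, g t) := by
  have h1 : (∏ t ∈ Finset.Ioc 0 (i-1), g t) * (∏ t ∈ Finset.Ioc (i-1) c, g t)
      = ∏ t ∈ Finset.Ioc 0 c, g t :=
    Finset.prod_Ioc_consecutive _ (by omega) (by omega)
  have h2 : (∏ t ∈ Finset.Ioc (i-1) i, g t) * (∏ t ∈ Finset.Ioc i c, g t)
      = ∏ t ∈ Finset.Ioc (i-1) c, g t :=
    Finset.prod_Ioc_consecutive _ (by omega) hic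
  have h3 : Finset.Ioc (i-1) i = {i} := by
    ext t
    simp only [Finset.mem_Ioc, Finset.mem_singleton]
    omega
  rw [← h1, ← h2, h3, Finset.prod_singleton, mul_assoc]

lemma chain_lower {K : Finset (Finset (Fin n))} (hM : Mat K)
    (hv : ∀ v : Fin n, {v} ∈ K) {d c : ℕ}
    (hrk : rk K Finset.univ = d) (hn : d + c = n) :
    ∀ t : ℕ, ∀ j : ℕ, j + t = c →
    (∏ i ∈ Finset.Ioc 0 t, mshift k K i) * (Rem K j).card ≤ (Rem K c).card := by
  intro t
  induction t with
  | zero =>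
    intro j hj
    have : j = c := by omega
    subst this
    simp
  | succ t ih =>
    intro j hj
    have hjc : j < c := by omega
    have hstep : (Rem K j).card * mshift k K (c - j) ≤ (Rem K (j+1)).card := by
      rw [card_Rem_succ]
      have := Finset.card_nsmul_le_sum (Rem K j)
        (fun f => (cycSet K (Sf f)).card) (mshift k K (c - j))
        (fun f hf => (cyc_bounds k hM hv hrk hn hjc hf).1)
      rwa [smul_eq_mul] at this
    have hih := ih (j + 1) (by omega)
    have hcj : c - j = t + 1 := by omega
    rw [Finset.prod_Ioc_succ_top (by omega)]
    calc (∏ i ∈ Finset.Ioc 0 t, mshift k K i) * mshift k K (t+1) * (Rem K j).card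
        = (∏ i ∈ Finset.Ioc 0 t, mshift k K i) * ((Rem K j).card * mshift k K (t+1)) := by
          ring
      _ ≤ (∏ i ∈ Finset.Ioc 0 t, mshift k K i) * (Rem K (j+1)).card := by
          apply Nat.mul_le_mul_left
          rw [← hcj]
          exact hstep
      _ ≤ (Rem K c).card := hih

lemma chain_upper {K : Finset (Finset (Fin n))} (hM : Mat K)
    (hv : ∀ v : Fin n, {v} ∈ K) {d c : ℕ}
    (hrk : rk K Finset.univ = d) (hn : d + c = n) :
    ∀ t : ℕ, ∀ j : ℕ, j + t = c →
    (Rem K c).card ≤ (∏ i ∈ Finset.Ioc 0 t, Mshift k K i) * (Rem K j).card := by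
  intro t
  induction t with
  | zero =>
    intro j hj
    have : j = c := by omega
    subst this
    simp
  | succ t ih =>
    intro j hj
    have hjc : j < c := by omega
    have hstep : (Rem K (j+1)).card ≤ (Rem K j).card * Mshift k K (c - j) := by
      rw [card_Rem_succ]
      have := Finset.sum_le_card_nsmul (Rem K j)
        (fun f => (cycSet K (Sf f)).card) (Mshift k K (c - j))
        (fun f hf => (cyc_bounds k hM hv hrk hn hjc hf).2)
      rwa [smul_eq_mul] at this
    have hih := ih (j + 1) (by omega)
    have hcj : c - j = t + 1 := by omega
    rw [Finset.prod_Ioc_succ_top (by omega)]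
    calc (Rem K c).card
        ≤ (∏ i ∈ Finset.Ioc 0 t, Mshift k K i) * (Rem K (j+1)).card := hih
      _ ≤ (∏ i ∈ Finset.Ioc 0 t, Mshift k K i) * ((Rem K j).card * Mshift k K (t+1)) := by
          apply Nat.mul_le_mul_left
          rw [← hcj]
          exact hstep
      _ = (∏ i ∈ Finset.Ioc 0 t, Mshift k K i) * Mshift k K (t+1) * (Rem K j).card := by
          ring

lemma Aj_lower {K : Finset (Finset (Fin n))} (hM : Mat K)
    (hv : ∀ v : Fin n, {v} ∈ K) {d c : ℕ}
    (hrk : rk K Finset.univ = d) (hn : d + c = n) :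
    ∀ j : ℕ, j ≤ c → (∏ i ∈ Finset.Ioc (c - j) c, mshift k K i) ≤ (Rem K j).card := by
  intro j
  induction j with
  | zero =>
    intro _
    simp only [Nat.sub_zero, Finset.Ioc_self, Finset.prod_empty]
    rw [card_Rem_zero]
  | succ j ih =>
    intro hj
    have hjc : j < c := by omega
    have hstep : (Rem K j).card * mshift k K (c - j) ≤ (Rem K (j+1)).card := by
      rw [card_Rem_succ]
      have := Finset.card_nsmul_le_sum (Rem K j)
        (fun f => (cycSet K (Sf f)).card) (mshift k K (c - j))
        (fun f hf => (cyc_bounds k hM hv hrk hn hjc hf).1)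
      rwa [smul_eq_mul] at this
    have hsplit : (∏ i ∈ Finset.Ioc (c - (j+1)) c, mshift k K i)
        = mshift k K (c - j) * ∏ i ∈ Finset.Ioc (c - j) c, mshift k K i := by
      have h1 : (∏ t ∈ Finset.Ioc (c - (j+1)) (c - j), mshift k K t)
          * (∏ t ∈ Finset.Ioc (c - j) c, mshift k K t)
          = ∏ t ∈ Finset.Ioc (c - (j+1)) c, mshift k K t :=
        Finset.prod_Ioc_consecutive _ (by omega) (by omega)
      have h2 : Finset.Ioc (c - (j+1)) (c - j) = {c - j} := by
        ext t
        simp only [Finset.mem_Ioc, Finset.mem_singleton]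
        omega
      rw [← h1, h2, Finset.prod_singleton]
    rw [hsplit]
    calc mshift k K (c - j) * ∏ i ∈ Finset.Ioc (c - j) c, mshift k K i
        ≤ mshift k K (c - j) * (Rem K j).card :=
          Nat.mul_le_mul_left _ (ih (by omega))
      _ = (Rem K j).card * mshift k K (c - j) := Nat.mul_comm _ _
      _ ≤ (Rem K (j+1)).card := hstep

lemma Aj_upper {K : Finset (Finset (Fin n))} (hM : Mat K)
    (hv : ∀ v : Fin n, {v} ∈ K) {d c : ℕ}
    (hrk : rk K Finset.univ = d) (hn : d + c = n) :
    ∀ j : ℕ, j ≤ c → (Rem K j).card ≤ ∏ i ∈ Finset.Ioc (c - j) c, Mshift k K i := by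
  intro j
  induction j with
  | zero =>
    intro _
    simp only [Nat.sub_zero, Finset.Ioc_self, Finset.prod_empty]
    rw [card_Rem_zero]
  | succ j ih =>
    intro hj
    have hjc : j < c := by omega
    have hstep : (Rem K (j+1)).card ≤ (Rem K j).card * Mshift k K (c - j) := by
      rw [card_Rem_succ]
      have := Finset.sum_le_card_nsmul (Rem K j)
        (fun f => (cycSet K (Sf f)).card) (Mshift k K (c - j))
        (fun f hf => (cyc_bounds k hM hv hrk hn hjc hf).2)
      rwa [smul_eq_mul] at this
    have hsplit : (∏ i ∈ Finset.Ioc (c - (j+1)) c, Mshift k K i)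
        = Mshift k K (c - j) * ∏ i ∈ Finset.Ioc (c - j) c, Mshift k K i := by
      have h1 : (∏ t ∈ Finset.Ioc (c - (j+1)) (c - j), Mshift k K t)
          * (∏ t ∈ Finset.Ioc (c - j) c, Mshift k K t)
          = ∏ t ∈ Finset.Ioc (c - (j+1)) c, Mshift k K t :=
        Finset.prod_Ioc_consecutive _ (by omega) (by omega)
      have h2 : Finset.Ioc (c - (j+1)) (c - j) = {c - j} := by
        ext t
        simp only [Finset.mem_Ioc, Finset.mem_singleton]
        omega
      rw [← h1, h2, Finset.prod_singleton]
    rw [hsplit]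
    calc (Rem K (j+1)).card
        ≤ (Rem K j).card * Mshift k K (c - j) := hstep
      _ = Mshift k K (c - j) * (Rem K j).card := Nat.mul_comm _ _
      _ ≤ Mshift k K (c - j) * ∏ i ∈ Finset.Ioc (c - j) c, Mshift k K i :=
          Nat.mul_le_mul_left _ (ih (by omega))

lemma exists_Rem_of_spanning {K : Finset (Finset (Fin n))} {d : ℕ}
    (hrk : rk K Finset.univ = d) {j : ℕ} {S : Finset (Fin n)}
    (hScard : S.card + j = n) (hSrk : rk K S = d) :
    ∃ f ∈ Rem K j, Sf f = S := by
  have hcompl : (Finset.univ \ S).card = j := by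
    rw [Finset.card_sdiff_of_subset (Finset.subset_univ S)]
    simp only [Finset.card_univ, Fintype.card_fin]
    omega
  set e := (Finset.univ \ S).equivFin with he
  refine ⟨fun i => (e.symm (Fin.cast hcompl.symm i) : Fin n), ?_, ?_⟩
  · refine mem_Rem.2 ⟨?_, ?_⟩
    · intro a b hab
      have h1 := Subtype.ext hab
      have h2 := e.symm.injective h1
      exact Fin.cast_injective hcompl.symm h2
    · have him : Finset.image (fun i => ((e.symm (Fin.cast hcompl.symm i) : _) : Fin n))
          Finset.univ = Finset.univ \ S := by
        ext u
        simp only [Finset.mem_image, Finset.mem_univ, true_and]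
        constructor
        · rintro ⟨i, rfl⟩
          exact (e.symm (Fin.cast hcompl.symm i)).2
        · intro hu
          refine ⟨Fin.cast hcompl (e ⟨u, hu⟩), ?_⟩
          have : Fin.cast hcompl.symm (Fin.cast hcompl (e ⟨u, hu⟩)) = e ⟨u, hu⟩ := by
            ext
            simp
          rw [this, Equiv.symm_apply_apply]
      have hSf : Sf (fun i => ((e.symm (Fin.cast hcompl.symm i) : _) : Fin n)) = S := by
        unfold Sf
        rw [him, Finset.sdiff_sdiff_self_left,
          Finset.inter_eq_right.2 (Finset.subset_univ S)]
      rw [hSf, hSrk, hrk]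
  · unfold Sf
    have him : Finset.image (fun i => ((e.symm (Fin.cast hcompl.symm i) : _) : Fin n))
        Finset.univ = Finset.univ \ S := by
      ext u
      simp only [Finset.mem_image, Finset.mem_univ, true_and]
      constructor
      · rintro ⟨i, rfl⟩
        exact (e.symm (Fin.cast hcompl.symm i)).2
      · intro hu
        refine ⟨Fin.cast hcompl (e ⟨u, hu⟩), ?_⟩
        have : Fin.cast hcompl.symm (Fin.cast hcompl (e ⟨u, hu⟩)) = e ⟨u, hu⟩ := by
          ext
          simp
        rw [this, Equiv.symm_apply_apply]
    rw [him, Finset.sdiff_sdiff_self_left,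
      Finset.inter_eq_right.2 (Finset.subset_univ S)]

end Chains

section Rigidity

variable (k : Type) [Field k]

lemma rigid_lower {K : Finset (Finset (Fin n))} (hM : Mat K)
    (hv : ∀ v : Fin n, {v} ∈ K) {d c : ℕ}
    (hrk : rk K Finset.univ = d) (hn : d + c = n)
    (heq : (Rem K c).card = ∏ i ∈ Finset.Ioc 0 c, mshift k K i)
    {i : ℕ} (hi1 : 1 ≤ i) (hic : i ≤ c) {W : Finset (Fin n)}
    (hWn : W.card = rk K W + i) (hWf : CFree K W) :
    W.card = mshift k K i := by
  have hmem : W.card ∈ {m : ℕ | ∃ W' : Finset (Fin n), W'.card = m ∧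
      homNonzero k (induced K W') ((W'.card : ℤ) - i - 1)} :=
    (mem_setS_iff k hM hv i _).2 ⟨W, rfl, hWn, hWf⟩
  have hle : mshift k K i ≤ W.card := Nat.sInf_le hmem
  by_contra hne
  have hgt : mshift k K i < W.card := by omega
  obtain ⟨S, hSrk, hScard, hScyc⟩ := cfree_realized hM hWf
  rw [hrk] at hSrk hScard
  set j := c - i with hj
  have hjc : j < c := by omega
  obtain ⟨f, hfR, hfS⟩ := exists_Rem_of_spanning hrk (S := S) (j := j) (by omega) hSrk
  have hcj : c - j = i := by omega
  have hA1 : 1 ≤ (Rem K j).card := Finset.card_pos.2 ⟨f, hfR⟩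
  have hsum := card_Rem_succ K j
  have hsplit : ∑ g ∈ (Rem K j).erase f, (cycSet K (Sf g)).card
      + (cycSet K (Sf f)).card = ∑ g ∈ Rem K j, (cycSet K (Sf g)).card :=
    Finset.sum_erase_add (Rem K j) (fun g => (cycSet K (Sf g)).card) hfR
  have hbound : ((Rem K j).erase f).card * mshift k K i
      ≤ ∑ g ∈ (Rem K j).erase f, (cycSet K (Sf g)).card := by
    have := Finset.card_nsmul_le_sum ((Rem K j).erase f)
      (fun g => (cycSet K (Sf g)).card) (mshift k K i)
      (fun g hg => by
        have hb := (cyc_bounds k hM hv hrk hn hjc (Finset.mem_of_mem_erase hg)).1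
        rwa [hcj] at hb)
    rwa [smul_eq_mul] at this
  have hce : ((Rem K j).erase f).card = (Rem K j).card - 1 :=
    Finset.card_erase_of_mem hfR
  have hWcyc : (cycSet K (Sf f)).card = W.card := by rw [hfS, hScyc]
  have hstep : (Rem K j).card * mshift k K i + 1 ≤ (Rem K (j+1)).card := by
    rw [hsum, ← hsplit, hWcyc]
    rw [hce] at hbound
    have h2 : ((Rem K j).card - 1) * mshift k K i + mshift k K i
        = (Rem K j).card * mshift k K i := by
      have h3 : (Rem K j).card - 1 + 1 = (Rem K j).card := by omega
      calc ((Rem K j).card - 1) * mshift k K i + mshift k K i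
          = ((Rem K j).card - 1 + 1) * mshift k K i := (Nat.succ_mul _ _).symm
        _ = (Rem K j).card * mshift k K i := by rw [h3]
    omega
  have hchain := chain_lower k hM hv hrk hn (i - 1) (j + 1) (by omega)
  have hQ1 : 1 ≤ ∏ t ∈ Finset.Ioc 0 (i-1), mshift k K t := by
    apply Finset.one_le_prod'
    intro t ht
    obtain ⟨ht1, ht2⟩ := Finset.mem_Ioc.1 ht
    exact mshift_pos k hM hv hrk hn (by omega) (by omega)
  have hAjB := Aj_lower k hM hv hrk hn j (by omega)
  rw [hcj] at hAjB
  have hfin : (∏ t ∈ Finset.Ioc 0 c, mshift k K t) + 1 ≤ (Rem K c).card := by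
    calc (∏ t ∈ Finset.Ioc 0 c, mshift k K t) + 1
        = (∏ t ∈ Finset.Ioc 0 (i-1), mshift k K t) * mshift k K i
            * (∏ t ∈ Finset.Ioc i c, mshift k K t) + 1 := by
          rw [prod_Ioc_split (mshift k K) hi1 hic]
      _ ≤ (∏ t ∈ Finset.Ioc 0 (i-1), mshift k K t) * mshift k K i
            * (Rem K j).card + (∏ t ∈ Finset.Ioc 0 (i-1), mshift k K t) := by
          have := Nat.mul_le_mul_left
            ((∏ t ∈ Finset.Ioc 0 (i-1), mshift k K t) * mshift k K i) hAjB
          omega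
      _ = (∏ t ∈ Finset.Ioc 0 (i-1), mshift k K t)
            * ((Rem K j).card * mshift k K i + 1) := by ring
      _ ≤ (∏ t ∈ Finset.Ioc 0 (i-1), mshift k K t) * (Rem K (j+1)).card :=
          Nat.mul_le_mul_left _ hstep
      _ ≤ (Rem K c).card := hchain
  omega

lemma rigid_upper {K : Finset (Finset (Fin n))} (hM : Mat K)
    (hv : ∀ v : Fin n, {v} ∈ K) {d c : ℕ}
    (hrk : rk K Finset.univ = d) (hn : d + c = n)
    (heq : (Rem K c).card = ∏ i ∈ Finset.Ioc 0 c, Mshift k K i)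
    {i : ℕ} (hi1 : 1 ≤ i) (hic : i ≤ c) {W : Finset (Fin n)}
    (hWn : W.card = rk K W + i) (hWf : CFree K W) :
    W.card = Mshift k K i := by
  have hmem : W.card ∈ {m : ℕ | ∃ W' : Finset (Fin n), W'.card = m ∧
      homNonzero k (induced K W') ((W'.card : ℤ) - i - 1)} :=
    (mem_setS_iff k hM hv i _).2 ⟨W, rfl, hWn, hWf⟩
  have hle : W.card ≤ Mshift k K i := le_csSup (setS_bddAbove k K i) hmem
  by_contra hne
  have hgt : W.card < Mshift k K i := by omega
  obtain ⟨S, hSrk, hScard, hScyc⟩ := cfree_realized hM hWf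
  rw [hrk] at hSrk hScard
  set j := c - i with hj
  have hjc : j < c := by omega
  obtain ⟨f, hfR, hfS⟩ := exists_Rem_of_spanning hrk (S := S) (j := j) (by omega) hSrk
  have hcj : c - j = i := by omega
  have hA1 : 1 ≤ (Rem K j).card := Finset.card_pos.2 ⟨f, hfR⟩
  have hsum := card_Rem_succ K j
  have hsplit : ∑ g ∈ (Rem K j).erase f, (cycSet K (Sf g)).card
      + (cycSet K (Sf f)).card = ∑ g ∈ Rem K j, (cycSet K (Sf g)).card :=
    Finset.sum_erase_add (Rem K j) (fun g => (cycSet K (Sf g)).card) hfR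
  have hbound : ∑ g ∈ (Rem K j).erase f, (cycSet K (Sf g)).card
      ≤ ((Rem K j).erase f).card * Mshift k K i := by
    have := Finset.sum_le_card_nsmul ((Rem K j).erase f)
      (fun g => (cycSet K (Sf g)).card) (Mshift k K i)
      (fun g hg => by
        have hb := (cyc_bounds k hM hv hrk hn hjc (Finset.mem_of_mem_erase hg)).2
        rwa [hcj] at hb)
    rwa [smul_eq_mul] at this
  have hce : ((Rem K j).erase f).card = (Rem K j).card - 1 :=
    Finset.card_erase_of_mem hfR
  have hWcyc : (cycSet K (Sf f)).card = W.card := by rw [hfS, hScyc]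
  have hstep : (Rem K (j+1)).card + 1 ≤ (Rem K j).card * Mshift k K i := by
    rw [hsum, ← hsplit, hWcyc]
    rw [hce] at hbound
    have h2 : ((Rem K j).card - 1) * Mshift k K i + Mshift k K i
        = (Rem K j).card * Mshift k K i := by
      have h3 : (Rem K j).card - 1 + 1 = (Rem K j).card := by omega
      calc ((Rem K j).card - 1) * Mshift k K i + Mshift k K i
          = ((Rem K j).card - 1 + 1) * Mshift k K i := (Nat.succ_mul _ _).symm
        _ = (Rem K j).card * Mshift k K i := by rw [h3]
    omega
  have hchain := chain_upper k hM hv hrk hn (i - 1) (j + 1) (by omega)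
  have hQ1 : 1 ≤ ∏ t ∈ Finset.Ioc 0 (i-1), Mshift k K t := by
    apply Finset.one_le_prod'
    intro t ht
    obtain ⟨ht1, ht2⟩ := Finset.mem_Ioc.1 ht
    calc 1 ≤ mshift k K t := mshift_pos k hM hv hrk hn (by omega) (by omega)
      _ ≤ Mshift k K t := mshift_le_Mshift k hM hv hrk hn (by omega) (by omega)
  have hAjB := Aj_upper k hM hv hrk hn j (by omega)
  rw [hcj] at hAjB
  have hfin : (Rem K c).card + 1 ≤ ∏ t ∈ Finset.Ioc 0 c, Mshift k K t := by
    have hc1 : (Rem K c).card + (∏ t ∈ Finset.Ioc 0 (i-1), Mshift k K t)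
        ≤ (∏ t ∈ Finset.Ioc 0 (i-1), Mshift k K t) * ((Rem K (j+1)).card + 1) := by
      have := hchain
      have h4 : (∏ t ∈ Finset.Ioc 0 (i-1), Mshift k K t) * ((Rem K (j+1)).card + 1)
          = (∏ t ∈ Finset.Ioc 0 (i-1), Mshift k K t) * (Rem K (j+1)).card
            + (∏ t ∈ Finset.Ioc 0 (i-1), Mshift k K t) := by ring
      omega
    have hc2 : (∏ t ∈ Finset.Ioc 0 (i-1), Mshift k K t) * ((Rem K (j+1)).card + 1)
        ≤ (∏ t ∈ Finset.Ioc 0 (i-1), Mshift k K t) * ((Rem K j).card * Mshift k K i) :=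
      Nat.mul_le_mul_left _ hstep
    have hc3 : (∏ t ∈ Finset.Ioc 0 (i-1), Mshift k K t) * ((Rem K j).card * Mshift k K i)
        ≤ (∏ t ∈ Finset.Ioc 0 (i-1), Mshift k K t)
            * ((∏ t ∈ Finset.Ioc i c, Mshift k K t) * Mshift k K i) :=
      Nat.mul_le_mul_left _ (Nat.mul_le_mul_right _ hAjB)
    have hc4 : (∏ t ∈ Finset.Ioc 0 (i-1), Mshift k K t)
          * ((∏ t ∈ Finset.Ioc i c, Mshift k K t) * Mshift k K i)
        = ∏ t ∈ Finset.Ioc 0 c, Mshift k K t := by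
      rw [prod_Ioc_split (Mshift k K) hi1 hic]
      ring
    omega
  omega

end Rigidity

/-- Theorem 2.1: the multiplicity conjecture for matroid complexes, together
with the statement that if either bound is attained then the resolution of
the face ring is pure. -/
theorem matroid_multiplicity
    (n d : ℕ) (k : Type) [Field k] (K : Finset (Finset (Fin n)))
    (hd : 0 < d) (hdn : d ≤ n)
    (hK : IsComplex K) (hv : ∀ v : Fin n, {v} ∈ K)
    (hmat : ∀ W : Finset (Fin n), IsPure (induced K W))
    (hdim : dimOf K = (d : ℤ) - 1) :
    (∏ i ∈ Finset.Icc 1 (n - d), (mshift k K i : ℚ)) / (n - d).factorial ≤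
        fcount K d ∧
    (fcount K d : ℚ) ≤
        (∏ i ∈ Finset.Icc 1 (n - d), (Mshift k K i : ℚ)) / (n - d).factorial ∧
    (((∏ i ∈ Finset.Icc 1 (n - d), (mshift k K i : ℚ)) / (n - d).factorial =
          fcount K d ∨
        (fcount K d : ℚ) =
          (∏ i ∈ Finset.Icc 1 (n - d), (Mshift k K i : ℚ)) / (n - d).factorial) →
      ∀ i ∈ Finset.Icc 1 (n - d), mshift k K i = Mshift k K i) := by
  have hM : Mat K := mat_of_pure hK hmat
  set c := n - d with hc
  have hn' : d + c = n := by omega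
  have hrk : rk K Finset.univ = d := by
    have h1 : induced K Finset.univ = K := induced_univ K
    have h2 : dimOf K = ((rk K Finset.univ : ℕ) : ℤ) - 1 := by
      unfold dimOf rk
      rw [h1]
    rw [h2] at hdim
    omega
  have hcount : (Rem K c).card = c.factorial * fcount K d := card_Rem_top hM hrk hn'
  have hIcc : Finset.Icc 1 c = Finset.Ioc 0 c := Finset.Icc_add_one_left_eq_Ioc 0 c
  have hlowN : (∏ i ∈ Finset.Icc 1 c, mshift k K i) ≤ c.factorial * fcount K d := by
    have h3 := chain_lower k hM hv hrk hn' c 0 (by omega)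
    rw [card_Rem_zero, Nat.mul_one, hcount] at h3
    rw [hIcc]
    exact h3
  have hupN : c.factorial * fcount K d ≤ ∏ i ∈ Finset.Icc 1 c, Mshift k K i := by
    have h3 := chain_upper k hM hv hrk hn' c 0 (by omega)
    rw [card_Rem_zero, Nat.mul_one, hcount] at h3
    rw [hIcc]
    exact h3
  have hfacpos : (0:ℚ) < (c.factorial : ℚ) :=
    Nat.cast_pos.2 (Nat.factorial_pos c)
  refine ⟨?_, ?_, ?_⟩
  · rw [div_le_iff₀ hfacpos]
    have h9 : ((∏ i ∈ Finset.Icc 1 c, mshift k K i : ℕ) : ℚ)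
        ≤ ((c.factorial * fcount K d : ℕ) : ℚ) := Nat.cast_le.2 hlowN
    push_cast at h9
    linarith
  · rw [le_div_iff₀ hfacpos]
    have h9 : ((c.factorial * fcount K d : ℕ) : ℚ)
        ≤ ((∏ i ∈ Finset.Icc 1 c, Mshift k K i : ℕ) : ℚ) := Nat.cast_le.2 hupN
    push_cast at h9
    linarith
  · intro hcase i hi
    obtain ⟨hi1, hic⟩ := Finset.mem_Icc.1 hi
    rcases hcase with hlow | hup
    · -- the lower bound is attained
      have hQeq : (∏ i ∈ Finset.Icc 1 c, (mshift k K i : ℚ))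
          = (fcount K d : ℚ) * (c.factorial : ℚ) :=
        (div_eq_iff (ne_of_gt hfacpos)).1 hlow
      have hNeq : (∏ i ∈ Finset.Icc 1 c, mshift k K i) = c.factorial * fcount K d := by
        have : ((∏ i ∈ Finset.Icc 1 c, mshift k K i : ℕ) : ℚ)
            = ((c.factorial * fcount K d : ℕ) : ℚ) := by
          push_cast
          rw [hQeq]
          ring
        exact_mod_cast this
      have heqA : (Rem K c).card = ∏ i ∈ Finset.Ioc 0 c, mshift k K i := by
        rw [hcount, ← hIcc, hNeq]
      have hMS : Mshift k K i ∈ {m : ℕ | ∃ W : Finset (Fin n), W.card = m ∧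
          homNonzero k (induced K W) ((W.card : ℤ) - i - 1)} :=
        Nat.sSup_mem (setS_nonempty k hM hv hrk hn' hi1 hic) (setS_bddAbove k K i)
      obtain ⟨W', hW'm, hW'n, hW'f⟩ := (mem_setS_iff k hM hv i _).1 hMS
      have hWlow := rigid_lower k hM hv hrk hn' heqA hi1 hic hW'n hW'f
      omega
    · -- the upper bound is attained
      have hQeq : (fcount K d : ℚ) * (c.factorial : ℚ)
          = (∏ i ∈ Finset.Icc 1 c, (Mshift k K i : ℚ)) := by
        rw [eq_div_iff (ne_of_gt hfacpos)] at hup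
        exact hup
      have hNeq : c.factorial * fcount K d = ∏ i ∈ Finset.Icc 1 c, Mshift k K i := by
        have : ((c.factorial * fcount K d : ℕ) : ℚ)
            = ((∏ i ∈ Finset.Icc 1 c, Mshift k K i : ℕ) : ℚ) := by
          push_cast
          rw [← hQeq]
          ring
        exact_mod_cast this
      have heqA : (Rem K c).card = ∏ i ∈ Finset.Ioc 0 c, Mshift k K i := by
        rw [hcount, ← hIcc, hNeq]
      have hMS : mshift k K i ∈ {m : ℕ | ∃ W : Finset (Fin n), W.card = m ∧
          homNonzero k (induced K W) ((W.card : ℤ) - i - 1)} :=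
        Nat.sInf_mem (setS_nonempty k hM hv hrk hn' hi1 hic)
      obtain ⟨W', hW'm, hW'n, hW'f⟩ := (mem_setS_iff k hM hv i _).1 hMS
      have hWup := rigid_upper k hM hv hrk hn' heqA hi1 hic hW'n hW'f
      omega


end MultConj
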